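/- arXiv:2007.04759 — 5 statements merged into one kernel-verified Lean document; each statement's English description precedes it below -/
import Mathlib

section
/- Let g : [0,1] → [0,1] be the hat function g(x) = min{2x, 2-2x}, and define g_1 = g and g_{m+1} = g ∘ g_m. Then for all x ∈ [0,1], x² = x - ∑_{m=1}^∞ g_m(x)/2^{2m}, i.e., the partial sums f_n(x) = x - ∑_{m=1}^n g_m(x)/2^{2m} converge to x² as n → ∞. -/
/-- The tent (hat) function `g(x) = min (2x) (2 - 2x)`. -/
noncomputable def tent : ℝ → ℝ := fun x => min (2 * x) (2 - 2 * x)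

lemma tent_mem {x : ℝ} (hx : x ∈ Set.Icc (0 : ℝ) 1) :
    tent x ∈ Set.Icc (0 : ℝ) 1 := by
  obtain ⟨h0, h1⟩ := hx
  unfold tent
  rcases le_total (2 * x) (2 - 2 * x) with h | h <;>
    simp [min_eq_left, min_eq_right, h] <;> constructor <;> linarith

lemma tent_key {y : ℝ} (hy : y ∈ Set.Icc (0 : ℝ) 1) :
    y - y ^ 2 = tent y / 4 + (tent y - (tent y) ^ 2) / 4 := by
  obtain ⟨h0, h1⟩ := hy
  unfold tent
  rcases le_total (2 * y) (2 - 2 * y) with h | h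
  · rw [min_eq_left h]; ring
  · rw [min_eq_right h]; ring

lemma iter_mem {x : ℝ} (hx : x ∈ Set.Icc (0 : ℝ) 1) (n : ℕ) :
    tent^[n] x ∈ Set.Icc (0 : ℝ) 1 := by
  induction n with
  | zero => simpa using hx
  | succ n ih => rw [Function.iterate_succ_apply']; exact tent_mem ih

lemma partial_id {x : ℝ} (hx : x ∈ Set.Icc (0 : ℝ) 1) (n : ℕ) :
    x - x ^ 2 = (∑ m ∈ Finset.Icc 1 n, tent^[m] x / 4 ^ m)
      + (tent^[n] x - (tent^[n] x) ^ 2) / 4 ^ n := by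
  induction n with
  | zero => simp
  | succ n ih =>
    rw [Finset.sum_Icc_succ_top (by omega : 1 ≤ n + 1)]
    have hkey := tent_key (iter_mem hx n)
    rw [Function.iterate_succ_apply']
    have h4 : (4 : ℝ) ^ n ≠ 0 := by positivity
    rw [ih, hkey, pow_succ]
    field_simp
    ring

/-- On `[0,1]`, the partial sums `f_n(x) = x - ∑_{m=1}^n g_m(x)/2^{2m}` of the
telescoping series built from the iterated tent maps `g_m = g∘⋯∘g` converge to `x²`. -/
theorem stmt_0 (x : ℝ) (hx : x ∈ Set.Icc (0 : ℝ) 1) :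
    Filter.Tendsto
      (fun n : ℕ => x - ∑ m ∈ Finset.Icc 1 n, tent^[m] x / 2 ^ (2 * m))
      Filter.atTop (nhds (x ^ 2)) := by
  have heq : ∀ n : ℕ, x - ∑ m ∈ Finset.Icc 1 n, tent^[m] x / 2 ^ (2 * m)
      = x ^ 2 + (tent^[n] x - (tent^[n] x) ^ 2) * (1 / 4 : ℝ) ^ n := by
    intro n
    have : ∀ m : ℕ, (2 : ℝ) ^ (2 * m) = 4 ^ m := by
      intro m; rw [pow_mul]; norm_num
    simp_rw [this]
    have h := partial_id hx n
    rw [div_pow, one_pow, mul_one_div]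
    linarith
  simp_rw [heq]
  have hz : Filter.Tendsto (fun n : ℕ =>
      (tent^[n] x - (tent^[n] x) ^ 2) * (1 / 4 : ℝ) ^ n) Filter.atTop (nhds 0) := by
    refine squeeze_zero_norm (a := fun n : ℕ => (1 / 4 : ℝ) ^ n) ?_ ?_
    · intro n
      obtain ⟨h0, h1⟩ := iter_mem hx n
      rw [norm_mul, norm_pow]
      have : ‖tent^[n] x - (tent^[n] x) ^ 2‖ ≤ 1 := by
        rw [Real.norm_eq_abs, abs_le]; constructor <;> nlinarith
      calc ‖tent^[n] x - (tent^[n] x) ^ 2‖ * ‖(1/4 : ℝ)‖ ^ n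
          ≤ 1 * ‖(1/4 : ℝ)‖ ^ n := by
            apply mul_le_mul_of_nonneg_right this (by positivity)
        _ = (1/4 : ℝ) ^ n := by rw [one_mul]; norm_num
    · exact tendsto_pow_atTop_nhds_zero_of_lt_one (by norm_num) (by norm_num)
  simpa using (tendsto_const_nhds.add hz)
end

section
/- Let σ : ℝ → ℝ be continuous and discriminatory with respect to a compact set K ⊆ ℝ^d, meaning: for every finite signed regular Borel measure μ on K, if ∫_K σ(w·x + b) dμ(x) = 0 for all w ∈ ℝ^d and b ∈ ℝ, then μ = 0. Then the set of functions x ↦ ∑_{i=1}^N c_i σ(w_i·x + b_i) (over all N ∈ ℕ, c_i, b_i ∈ ℝ, w_i ∈ ℝ^d) is dense in C(K) with the supremum norm. -/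
open MeasureTheory Set Function Topology
open scoped ENNReal NNReal

namespace Cybenko

set_option linter.unusedSectionVars false
variable {X : Type*} [MetricSpace X] [CompactSpace X]

/-- positivity of a linear functional -/
def Pos (Λ : C(X,ℝ) →ₗ[ℝ] ℝ) : Prop := ∀ f : C(X,ℝ), 0 ≤ f → 0 ≤ Λ f

variable (Λ : C(X,ℝ) →ₗ[ℝ] ℝ)

lemma Pos.mono (hΛ : Pos Λ) {f g : C(X,ℝ)} (h : f ≤ g) : Λ f ≤ Λ g := by
  have h0 : (0:C(X,ℝ)) ≤ g - f := by
    intro x; simpa using h x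
  have := hΛ _ h0
  rw [map_sub] at this; linarith

/-- the competitor predicate -/
def Comp (g : C(X,ℝ)) (U : Set X) : Prop := 0 ≤ g ∧ g ≤ 1 ∧ tsupport g ⊆ U

noncomputable def rc (U : Set X) : ℝ≥0∞ :=
  ⨆ (g : C(X,ℝ)) (_ : Comp g U), ENNReal.ofReal (Λ g)

lemma rc_mono {U V : Set X} (h : U ⊆ V) : rc Λ U ≤ rc Λ V := by
  refine iSup₂_le fun g hg => ?_
  exact le_iSup₂ (f := fun g _ => ENNReal.ofReal (Λ g)) g ⟨hg.1, hg.2.1, hg.2.2.trans h⟩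

lemma rc_le (hΛ : Pos Λ) (U : Set X) : rc Λ U ≤ ENNReal.ofReal (Λ 1) := by
  refine iSup₂_le fun g hg => ?_
  exact ENNReal.ofReal_le_ofReal (hΛ.mono Λ hg.2.1)

lemma rc_lt_top (hΛ : Pos Λ) (U : Set X) : rc Λ U < ∞ :=
  lt_of_le_of_lt (rc_le Λ hΛ U) ENNReal.ofReal_lt_top

lemma rc_empty : rc Λ (∅ : Set X) = 0 := by
  refine le_antisymm (iSup₂_le fun g hg => ?_) zero_le
  have : g = 0 := by
    ext x
    have := eq_empty_of_subset_empty ((subset_tsupport _).trans hg.2.2)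
    by_contra hx
    exact absurd (mem_support.mpr (by simpa using hx)) (by simp [this])
  simp [this]

lemma le_rc {U : Set X} {g : C(X,ℝ)} (hg : Comp g U) : ENNReal.ofReal (Λ g) ≤ rc Λ U :=
  le_iSup₂ (f := fun g _ => ENNReal.ofReal (Λ g)) g hg

/-- countable subadditivity of `rc` on open sets, via partitions of unity -/
lemma rc_iUnion_le (hΛ : Pos Λ) {U : Set X} {V : ℕ → Set X} (hV : ∀ n, IsOpen (V n))
    (hU : U ⊆ ⋃ n, V n) : rc Λ U ≤ ∑' n, rc Λ (V n) := by
  refine iSup₂_le fun g hg => ?_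
  have hc : IsCompact (tsupport g) := (isClosed_tsupport g).isCompact
  obtain ⟨F, hF⟩ := hc.elim_finite_subcover V hV (hg.2.2.trans hU)
  have hcov : tsupport g ⊆ ⋃ n : F, V n := by
    rwa [← iUnion_subtype (fun n => n ∈ F) (fun n => V n)] at hF
  obtain ⟨p, hp⟩ := PartitionOfUnity.exists_isSubordinate (isClosed_tsupport g)
    (fun n : F => V n) (fun n => hV n) hcov
  set q : F → C(X,ℝ) := fun n => p n * g with hq
  have hgsum : g = ∑ n : F, q n := by
    ext x
    by_cases hx : x ∈ support g
    · have h1 : ∑ᶠ n, p n x = 1 := p.sum_eq_one (subset_tsupport g hx)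
      rw [finsum_eq_sum_of_fintype] at h1
      simp only [ContinuousMap.sum_apply, hq, ContinuousMap.mul_apply]
      rw [← Finset.sum_mul, h1, one_mul]
    · have hgx : g x = 0 := by simpa [mem_support, not_not] using hx
      simp [hq, hgx]
  have hqc : ∀ n : F, Comp (q n) (V n) := by
    intro n
    refine ⟨fun x => mul_nonneg (p.nonneg n x) (hg.1 x), fun x => ?_, ?_⟩
    · simpa [hq] using mul_le_one₀ (p.le_one n x) (hg.1 x) (hg.2.1 x)
    · refine subset_trans ?_ (hp n)
      apply closure_mono
      intro x hx
      simp only [hq, mem_support, ContinuousMap.mul_apply] at hx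
      exact fun h0 => hx (by simp [h0])
  calc ENNReal.ofReal (Λ g) = ENNReal.ofReal (∑ n : F, Λ (q n)) := by rw [hgsum, map_sum]
    _ = ∑ n : F, ENNReal.ofReal (Λ (q n)) :=
        ENNReal.ofReal_sum_of_nonneg (fun n _ => hΛ _ (hqc n).1)
    _ ≤ ∑ n : F, rc Λ (V n) := Finset.sum_le_sum fun n _ => le_rc Λ (hqc n)
    _ = ∑ n ∈ F, rc Λ (V n) := Finset.sum_coe_sort F (fun n => rc Λ (V n))
    _ ≤ ∑' n, rc Λ (V n) := ENNReal.sum_le_tsum F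



noncomputable def rc0 (A : Set X) : ℝ≥0∞ := ⨅ (U : Set X) (_ : IsOpen U ∧ A ⊆ U), rc Λ U

lemma rc0_le {A U : Set X} (hU : IsOpen U) (hAU : A ⊆ U) : rc0 Λ A ≤ rc Λ U :=
  iInf₂_le U ⟨hU, hAU⟩

lemma le_rc0 {A : Set X} {c : ℝ≥0∞} (h : ∀ U : Set X, IsOpen U → A ⊆ U → c ≤ rc Λ U) :
    c ≤ rc0 Λ A :=
  le_iInf₂ fun U hU => h U hU.1 hU.2

lemma rc0_open {U : Set X} (hU : IsOpen U) : rc0 Λ U = rc Λ U :=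
  le_antisymm (rc0_le Λ hU subset_rfl) (le_rc0 Λ fun V _ hUV => rc_mono Λ hUV)

lemma rc0_mono {A B : Set X} (h : A ⊆ B) : rc0 Λ A ≤ rc0 Λ B :=
  le_rc0 Λ fun U hU hBU => rc0_le Λ hU (h.trans hBU)

lemma rc0_empty : rc0 Λ (∅ : Set X) = 0 := by
  rw [rc0_open Λ isOpen_empty, rc_empty]

lemma rc0_lt_top (hΛ : Pos Λ) (A : Set X) : rc0 Λ A < ∞ :=
  lt_of_le_of_lt (rc0_le Λ isOpen_univ (subset_univ A)) (rc_lt_top Λ hΛ _)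

lemma rc0_subadd (hΛ : Pos Λ) {A : Set X} {t : ℕ → Set X} (hA : A ⊆ ⋃ n, t n) :
    rc0 Λ A ≤ ∑' n, rc0 Λ (t n) := by
  refine ENNReal.le_of_forall_pos_le_add fun ε hε _ => ?_
  obtain ⟨δ, hδpos, hδsum⟩ := ENNReal.exists_pos_sum_of_countable
    (ENNReal.coe_ne_zero.mpr hε.ne') ℕ
  have hch : ∀ n : ℕ, ∃ V : Set X, IsOpen V ∧ t n ⊆ V ∧ rc Λ V ≤ rc0 Λ (t n) + δ n := by
    intro n
    by_contra hcon
    push_neg at hcon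
    have h1 : rc0 Λ (t n) + δ n ≤ rc0 Λ (t n) :=
      le_rc0 Λ fun U hU hsub => (hcon U hU hsub).le
    have h2 : rc0 Λ (t n) < rc0 Λ (t n) + δ n :=
      ENNReal.lt_add_right (rc0_lt_top Λ hΛ _).ne (by simpa using (hδpos n).ne')
    exact absurd (h2.trans_le h1) (lt_irrefl _)
  choose V hVopen hVsub hVle using hch
  have hAV : A ⊆ ⋃ n, V n := hA.trans (iUnion_mono hVsub)
  calc rc0 Λ A ≤ rc Λ (⋃ n, V n) := rc0_le Λ (isOpen_iUnion hVopen) hAV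
    _ ≤ ∑' n, rc Λ (V n) := rc_iUnion_le Λ hΛ hVopen subset_rfl
    _ ≤ ∑' n, (rc0 Λ (t n) + δ n) := ENNReal.tsum_le_tsum hVle
    _ = ∑' n, rc0 Λ (t n) + ∑' n, (δ n : ℝ≥0∞) := ENNReal.tsum_add
    _ ≤ ∑' n, rc0 Λ (t n) + ε := add_le_add le_rfl hδsum.le

/-- the outer measure associated to a positive functional -/
noncomputable def om : OuterMeasure X := OuterMeasure.ofFunction (rc0 Λ) (rc0_empty Λ)

lemma om_eq (hΛ : Pos Λ) (A : Set X) : om Λ A = rc0 Λ A :=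
  OuterMeasure.ofFunction_eq A (fun _ hst => rc0_mono Λ hst)
    (fun t => rc0_subadd Λ hΛ subset_rfl)

lemma om_open (hΛ : Pos Λ) {U : Set X} (hU : IsOpen U) : om Λ U = rc Λ U := by
  rw [om_eq Λ hΛ, rc0_open Λ hU]



lemma om_isMetric (hΛ : Pos Λ) : (om Λ).IsMetric := by
  intro s t hst
  refine le_antisymm (measure_union_le s t) ?_
  obtain ⟨r, hr0, hr⟩ := hst
  set Us : Set X := {x | EMetric.infEdist x s < r / 2} with hUs
  set Ut : Set X := {x | EMetric.infEdist x t < r / 2} with hUt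
  have hUso : IsOpen Us := isOpen_lt EMetric.continuous_infEdist continuous_const
  have hUto : IsOpen Ut := isOpen_lt EMetric.continuous_infEdist continuous_const
  have hsUs : s ⊆ Us := fun x hx => by
    simp only [hUs, mem_setOf_eq, EMetric.infEdist_zero_of_mem hx]
    exact lt_of_le_of_lt (le_of_eq (EMetric.infEdist_zero_of_mem hx)) (ENNReal.half_pos hr0)
  have htUt : t ⊆ Ut := fun x hx => by
    simp only [hUt, mem_setOf_eq, EMetric.infEdist_zero_of_mem hx]
    exact lt_of_le_of_lt (le_of_eq (EMetric.infEdist_zero_of_mem hx)) (ENNReal.half_pos hr0)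
  have hdisj : Us ∩ Ut = ∅ := by
    ext x
    simp only [mem_inter_iff, mem_setOf_eq, mem_empty_iff_false, iff_false, not_and, hUs, hUt]
    intro hxs hxt
    obtain ⟨y, hy, hyd⟩ := EMetric.infEdist_lt_iff.mp hxs
    obtain ⟨z, hz, hzd⟩ := EMetric.infEdist_lt_iff.mp hxt
    have : edist y z < r := by
      calc edist y z ≤ edist y x + edist x z := edist_triangle _ _ _
        _ < r / 2 + r / 2 := ENNReal.add_lt_add (by rwa [edist_comm]) hzd
        _ = r := ENNReal.add_halves r
    exact absurd this (not_lt.mpr (hr y hy z hz))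
  rw [om_eq Λ hΛ, om_eq Λ hΛ, om_eq Λ hΛ]
  refine le_rc0 Λ fun W hW hsub => ?_
  have h1 : rc0 Λ s ≤ rc Λ (W ∩ Us) :=
    rc0_le Λ (hW.inter hUso) (subset_inter (subset_union_left.trans hsub) hsUs)
  have h2 : rc0 Λ t ≤ rc Λ (W ∩ Ut) :=
    rc0_le Λ (hW.inter hUto) (subset_inter (subset_union_right.trans hsub) htUt)
  refine le_trans (add_le_add h1 h2) ?_
  rw [rc, rc]
  refine ENNReal.biSup_add_biSup_le' (p := fun g => Comp g (W ∩ Us))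
    (q := fun g => Comp g (W ∩ Ut)) ⟨0, by simp [Comp, tsupport]⟩ ⟨0, by simp [Comp, tsupport]⟩
    fun g₁ hg₁ g₂ hg₂ => ?_
  have hsum : Comp (g₁ + g₂) W := by
    refine ⟨by intro x; simpa using add_nonneg (hg₁.1 x) (hg₂.1 x), fun x => ?_, ?_⟩
    · by_cases hx : x ∈ tsupport g₁
      · have hx2 : x ∉ support g₂ := fun hs2 =>
          (eq_empty_iff_forall_notMem.mp hdisj x)
            ⟨(hg₁.2.2 hx).2, (hg₂.2.2 (subset_tsupport _ hs2)).2⟩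
        have : g₂ x = 0 := by simpa [mem_support, not_not] using hx2
        simpa [this] using hg₁.2.1 x
      · have : g₁ x = 0 := image_eq_zero_of_notMem_tsupport hx
        simpa [this] using hg₂.2.1 x
    · refine subset_trans (closure_mono (support_add _ _)) ?_
      rw [closure_union]
      exact union_subset ((hg₁.2.2).trans inter_subset_left)
        ((hg₂.2.2).trans inter_subset_left)
  calc ENNReal.ofReal (Λ g₁) + ENNReal.ofReal (Λ g₂)
      = ENNReal.ofReal (Λ (g₁ + g₂)) := by
        rw [map_add, ENNReal.ofReal_add (hΛ _ hg₁.1) (hΛ _ hg₂.1)]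
    _ ≤ rc Λ W := le_rc Λ hsum

variable [MeasurableSpace X] [BorelSpace X]

/-- the measure associated to a positive functional -/
noncomputable def mu (hΛ : Pos Λ) : Measure X :=
  (om Λ).toMeasure (by
    rw [BorelSpace.measurable_eq (α := X)]
    exact (om_isMetric Λ hΛ).borel_le_caratheodory)

lemma mu_apply (hΛ : Pos Λ) {s : Set X} (hs : MeasurableSet s) :
    mu Λ hΛ s = rc0 Λ s := by
  rw [mu, MeasureTheory.toMeasure_apply _ _ hs, om_eq Λ hΛ]

lemma mu_open (hΛ : Pos Λ) {U : Set X} (hU : IsOpen U) : mu Λ hΛ U = rc Λ U := by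
  rw [mu_apply Λ hΛ hU.measurableSet, rc0_open Λ hU]

instance (hΛ : Pos Λ) : IsFiniteMeasure (mu Λ hΛ) := by
  constructor
  rw [mu_apply Λ hΛ MeasurableSet.univ]
  exact rc0_lt_top Λ hΛ _



instance mu_outerRegular (hΛ : Pos Λ) : (mu Λ hΛ).OuterRegular := by
  constructor
  intro A hA r hr
  rw [mu_apply Λ hΛ hA] at hr
  have : ∃ U : Set X, ∃ _ : IsOpen U ∧ A ⊆ U, rc Λ U < r := by
    simpa [rc0, iInf_lt_iff] using hr
  obtain ⟨U, ⟨hUo, hAU⟩, hUr⟩ := this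
  exact ⟨U, hAU, hUo, by rwa [mu_open Λ hΛ hUo]⟩

lemma mu_tsupport_le (hΛ : Pos Λ) {g : C(X,ℝ)} (hg0 : 0 ≤ g) (hg1 : g ≤ 1) :
    ENNReal.ofReal (Λ g) ≤ mu Λ hΛ (tsupport g) := by
  rw [mu_apply Λ hΛ (isClosed_tsupport _).measurableSet]
  exact le_rc0 Λ fun U hU hsub => le_rc Λ ⟨hg0, hg1, hsub⟩

instance mu_regular (hΛ : Pos Λ) : (mu Λ hΛ).Regular := by
  constructor
  intro U hU r hr
  rw [mu_open Λ hΛ hU] at hr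
  have : ∃ g : C(X,ℝ), ∃ _ : Comp g U, r < ENNReal.ofReal (Λ g) := by
    simpa [rc, lt_iSup_iff] using hr
  obtain ⟨g, hg, hgr⟩ := this
  refine ⟨tsupport g, hg.2.2, (isClosed_tsupport _).isCompact, ?_⟩
  exact hgr.trans_le (mu_tsupport_le Λ hΛ hg.1 hg.2.1)

lemma mu_univ (hΛ : Pos Λ) : mu Λ hΛ univ = ENNReal.ofReal (Λ 1) := by
  rw [mu_open Λ hΛ isOpen_univ]
  refine le_antisymm (rc_le Λ hΛ _) (le_rc Λ ⟨?_, le_rfl, subset_univ _⟩)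
  intro x; simp

lemma lam_one (hΛ : Pos Λ) : Λ 1 = (mu Λ hΛ univ).toReal := by
  rw [mu_univ Λ hΛ, ENNReal.toReal_ofReal (hΛ 1 (by intro x; simp))]

lemma integrable_cm (μ : Measure X) [IsFiniteMeasure μ] (g : C(X,ℝ)) :
    Integrable g μ :=
  (BoundedContinuousFunction.mkOfCompact g).integrable μ

/-- the clamp function x ↦ clamp ((f x - a)/δ) to [0,1] -/
noncomputable def clampf (f : C(X,ℝ)) (δ a : ℝ) : C(X,ℝ) :=
  ContinuousMap.mk (fun x => max 0 (min 1 ((f x - a)/δ))) (by fun_prop)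

lemma clampf_nonneg (f : C(X,ℝ)) (δ a : ℝ) : (0:C(X,ℝ)) ≤ clampf f δ a := by
  intro x; simp [clampf]

lemma clampf_le_one (f : C(X,ℝ)) (δ a : ℝ) : clampf f δ a ≤ (1:C(X,ℝ)) := by
  intro x
  simp only [clampf, ContinuousMap.coe_mk, ContinuousMap.one_apply]
  exact max_le zero_le_one (min_le_left _ _)

lemma clampf_eq_one {f : C(X,ℝ)} {δ a : ℝ} (hδ : 0 < δ) {x : X} (hx : a + δ ≤ f x) :
    clampf f δ a x = 1 := by
  have h1 : (1:ℝ) ≤ (f x - a)/δ := (one_le_div hδ).mpr (by linarith)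
  simp [clampf, min_eq_left h1]

lemma clampf_support {f : C(X,ℝ)} {δ a : ℝ} (hδ : 0 < δ) :
    tsupport (clampf f δ a) ⊆ {x | a ≤ f x} := by
  refine closure_minimal ?_ (isClosed_le continuous_const f.continuous)
  intro x hx
  simp only [mem_support, clampf, ContinuousMap.coe_mk] at hx
  by_contra hc
  simp only [mem_setOf_eq, not_le] at hc
  have h1 : (f x - a)/δ < 0 := div_neg_of_neg_of_pos (by linarith) hδ
  have h2 : (1:ℝ) ⊓ ((f x - a)/δ) ≤ 0 := le_trans (min_le_right _ _) h1.le
  exact hx (max_eq_left h2)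

lemma clampf_mul (f : C(X,ℝ)) {δ : ℝ} (hδ : 0 < δ) (a : ℝ) (x : X) :
    δ * clampf f δ a x = min δ (max 0 (f x - a)) := by
  simp only [clampf, ContinuousMap.coe_mk]
  rcases le_total (f x) a with h | h
  · have h1 : (f x - a)/δ ≤ 0 := div_nonpos_of_nonpos_of_nonneg (by linarith) hδ.le
    rw [max_eq_left (le_trans (min_le_right _ _) h1), max_eq_left (by linarith),
      min_eq_right hδ.le, mul_zero]
  · rw [max_eq_right (le_min zero_le_one (div_nonneg (by linarith) hδ.le)),
      max_eq_right (by linarith)]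
    rcases le_total (f x - a) δ with h2 | h2
    · rw [min_eq_right ((div_le_one hδ).mpr h2), min_eq_right h2, mul_div_cancel₀ _ hδ.ne']
    · rw [min_eq_left ((one_le_div hδ).mpr h2), min_eq_left h2, mul_one]

lemma min_sub_min (t a δ : ℝ) (hδ : 0 ≤ δ) :
    min t (a + δ) - min t a = min δ (max 0 (t - a)) := by
  rcases le_total t a with h | h
  · rw [min_eq_left (by linarith), min_eq_left h, max_eq_left (by linarith),
      min_eq_right hδ]; ring
  · rw [min_eq_right h, max_eq_right (by linarith)]
    rcases le_total t (a + δ) with h2 | h2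
    · rw [min_eq_left h2, min_eq_right (by linarith)]
    · rw [min_eq_right h2, min_eq_left (by linarith)]; ring

lemma telescope (f : C(X,ℝ)) {δ : ℝ} (hδ : 0 < δ) (M : ℕ) (x : X) :
    δ * ∑ i ∈ Finset.range M, clampf f δ ((i+1)*δ) x
      = min (f x) ((M+1)*δ) - min (f x) δ := by
  induction M with
  | zero => simp
  | succ M ih =>
    rw [Finset.sum_range_succ, mul_add, ih, clampf_mul f hδ]
    have key := min_sub_min (f x) (((M:ℝ)+1)*δ) δ hδ.le
    push_cast
    rw [show ((M:ℝ)+1+1)*δ = ((M:ℝ)+1)*δ + δ by ring]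
    linarith [key]



lemma clampf_eq_zero {f : C(X,ℝ)} {δ a : ℝ} (hδ : 0 < δ) {x : X} (hx : f x ≤ a) :
    clampf f δ a x = 0 := by
  have h1 : (f x - a)/δ ≤ 0 := div_nonpos_of_nonpos_of_nonneg (by linarith) hδ.le
  simp only [clampf, ContinuousMap.coe_mk]
  exact max_eq_left (le_trans (min_le_right _ _) h1)

lemma isOpen_lev (f : C(X,ℝ)) (b : ℝ) : IsOpen {x | b < f x} :=
  isOpen_lt continuous_const f.continuous

lemma lam_clampf_le (hΛ : Pos Λ) (f : C(X,ℝ)) {δ : ℝ} (hδ : 0 < δ) {a b : ℝ} (hab : b < a) :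
    Λ (clampf f δ a) ≤ (mu Λ hΛ {x | b < f x}).toReal := by
  have hcomp : Comp (clampf f δ a) {x | b < f x} :=
    ⟨clampf_nonneg f δ a, clampf_le_one f δ a,
      (clampf_support hδ).trans (fun x hx => lt_of_lt_of_le hab hx)⟩
  have h1 : ENNReal.ofReal (Λ (clampf f δ a)) ≤ mu Λ hΛ {x | b < f x} := by
    rw [mu_open Λ hΛ (isOpen_lev f b)]
    exact le_rc Λ hcomp
  have h2 := ENNReal.toReal_mono (measure_ne_top _ _) h1
  rwa [ENNReal.toReal_ofReal (hΛ _ (clampf_nonneg f δ a))] at h2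

lemma mu_le_lam_clampf (hΛ : Pos Λ) (f : C(X,ℝ)) {δ : ℝ} (hδ : 0 < δ) {a b : ℝ}
    (hab : a + δ ≤ b) :
    (mu Λ hΛ {x | b < f x}).toReal ≤ Λ (clampf f δ a) := by
  have h1 : mu Λ hΛ {x | b < f x} ≤ ENNReal.ofReal (Λ (clampf f δ a)) := by
    rw [mu_open Λ hΛ (isOpen_lev f b)]
    refine iSup₂_le fun g hg => ENNReal.ofReal_le_ofReal (hΛ.mono Λ fun x => ?_)
    show g x ≤ clampf f δ a x
    by_cases hx : x ∈ support g
    · have hfx : b < f x := hg.2.2 (subset_tsupport _ hx)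
      rw [clampf_eq_one hδ (by linarith)]
      exact hg.2.1 x
    · have : g x = 0 := by simpa [mem_support, not_not] using hx
      rw [this]; exact (clampf_nonneg f δ a) x
  have h2 := ENNReal.toReal_mono (by simp) h1
  rwa [ENNReal.toReal_ofReal (hΛ _ (clampf_nonneg f δ a))] at h2

lemma int_clampf_le (hΛ : Pos Λ) (f : C(X,ℝ)) {δ : ℝ} (hδ : 0 < δ) {a b : ℝ} (hab : b < a) :
    ∫ x, clampf f δ a x ∂(mu Λ hΛ) ≤ (mu Λ hΛ {x | b < f x}).toReal := by
  set U : Set X := {x | b < f x} with hU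
  have hmeas : MeasurableSet U := (isOpen_lev f b).measurableSet
  have h1 : ∀ x, clampf f δ a x ≤ U.indicator (fun _ => (1:ℝ)) x := by
    intro x
    by_cases hx : x ∈ U
    · rw [indicator_of_mem hx]; exact (clampf_le_one f δ a) x
    · rw [indicator_of_notMem hx, clampf_eq_zero hδ]
      simp only [hU, mem_setOf_eq, not_lt] at hx
      linarith
  calc ∫ x, clampf f δ a x ∂(mu Λ hΛ)
      ≤ ∫ x, U.indicator (fun _ => (1:ℝ)) x ∂(mu Λ hΛ) :=
        integral_mono (integrable_cm _ _) ((integrable_const 1).indicator hmeas) h1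
    _ = (mu Λ hΛ U).toReal := by rw [integral_indicator_const _ hmeas]; simp [Measure.real]

lemma le_int_clampf (hΛ : Pos Λ) (f : C(X,ℝ)) {δ : ℝ} (hδ : 0 < δ) {a b : ℝ}
    (hab : a + δ ≤ b) :
    (mu Λ hΛ {x | b < f x}).toReal ≤ ∫ x, clampf f δ a x ∂(mu Λ hΛ) := by
  set U : Set X := {x | b < f x} with hU
  have hmeas : MeasurableSet U := (isOpen_lev f b).measurableSet
  have h1 : ∀ x, U.indicator (fun _ => (1:ℝ)) x ≤ clampf f δ a x := by
    intro x
    by_cases hx : x ∈ U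
    · rw [indicator_of_mem hx, clampf_eq_one hδ (by
        simp only [hU, mem_setOf_eq] at hx; linarith)]
    · rw [indicator_of_notMem hx]; exact (clampf_nonneg f δ a) x
  calc (mu Λ hΛ U).toReal
      = ∫ x, U.indicator (fun _ => (1:ℝ)) x ∂(mu Λ hΛ) := by
        rw [integral_indicator_const _ hmeas]; simp [Measure.real]
    _ ≤ ∫ x, clampf f δ a x ∂(mu Λ hΛ) :=
        integral_mono ((integrable_const 1).indicator hmeas) (integrable_cm _ _) h1

lemma rep_nonneg (hΛ : Pos Λ) (f : C(X,ℝ)) (hf : (0:C(X,ℝ)) ≤ f) :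
    Λ f = ∫ x, f x ∂(mu Λ hΛ) := by
  set muv := (mu Λ hΛ univ).toReal with hmuv
  have hmuv0 : 0 ≤ muv := ENNReal.toReal_nonneg
  have hΛ1 : 0 ≤ Λ 1 := hΛ 1 (by intro x; simp)
  have key : ∀ δ : ℝ, 0 < δ → |Λ f - ∫ x, f x ∂(mu Λ hΛ)| ≤ δ * (Λ 1 + 3 * muv) := by
    intro δ hδ
    set M := ⌈‖f‖/δ⌉₊ + 1 with hM
    have hMδ : ‖f‖ ≤ M * δ := by
      have h1 := Nat.le_ceil (‖f‖/δ)
      have h2 : (⌈‖f‖/δ⌉₊ : ℝ) ≤ (M:ℝ) := by rw [hM]; push_cast; linarith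
      calc ‖f‖ = (‖f‖/δ)*δ := by field_simp
        _ ≤ (M:ℝ)*δ := mul_le_mul_of_nonneg_right (h1.trans h2) hδ.le
    set S : C(X,ℝ) := δ • ∑ i ∈ Finset.range M, clampf f δ ((i+1)*δ) with hS
    have hSx : ∀ x, S x = f x - min (f x) δ := by
      intro x
      have ht := telescope f hδ M x
      have hfx : f x ≤ ((M:ℝ)+1)*δ := by
        have := (le_abs_self (f x)).trans ((Real.norm_eq_abs (f x)) ▸ f.norm_coe_le_norm x)
        nlinarith
      have hmin : min (f x) (((M:ℝ)+1)*δ) = f x := min_eq_left hfx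
      have : S x = δ * ∑ i ∈ Finset.range M, clampf f δ ((i+1)*δ) x := by
        simp [hS, ContinuousMap.sum_apply]
      rw [this, ht, hmin]
    have hSf : S ≤ f := by
      intro x
      show S x ≤ f x
      rw [hSx x]
      have : 0 ≤ min (f x) δ := le_min (hf x) hδ.le
      linarith
    have hfS : f ≤ S + δ • (1:C(X,ℝ)) := by
      intro x
      show f x ≤ (S + δ • (1:C(X,ℝ))) x
      simp only [ContinuousMap.add_apply, ContinuousMap.smul_apply, ContinuousMap.one_apply,
        smul_eq_mul, mul_one, hSx x]
      linarith [min_le_right (f x) δ]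
    set a : ℕ → ℝ := fun i => (mu Λ hΛ {x | (i:ℝ)*δ < f x}).toReal with ha
    have hamono : ∀ i : ℕ, a (i+1) ≤ a i := by
      intro i
      refine ENNReal.toReal_mono (measure_ne_top _ _) (measure_mono fun x hx => ?_)
      simp only [mem_setOf_eq] at hx ⊢
      push_cast at hx ⊢
      nlinarith
    have ha0 : ∀ i, 0 ≤ a i := fun i => ENNReal.toReal_nonneg
    have hauniv : ∀ i, a i ≤ muv := fun i =>
      ENNReal.toReal_mono (measure_ne_top _ _) (measure_mono (subset_univ _))
    have hup : ∀ i : ℕ, Λ (clampf f δ ((i+1)*δ)) ≤ a i := by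
      intro i
      refine lam_clampf_le Λ hΛ f hδ ?_
      push_cast; nlinarith
    have hlow : ∀ i : ℕ, a (i+2) ≤ Λ (clampf f δ ((i+1)*δ)) := by
      intro i
      refine mu_le_lam_clampf Λ hΛ f hδ ?_
      push_cast; nlinarith
    have hiup : ∀ i : ℕ, ∫ x, clampf f δ ((i+1)*δ) x ∂(mu Λ hΛ) ≤ a i := by
      intro i
      refine int_clampf_le Λ hΛ f hδ ?_
      push_cast; nlinarith
    have hilow : ∀ i : ℕ, a (i+2) ≤ ∫ x, clampf f δ ((i+1)*δ) x ∂(mu Λ hΛ) := by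
      intro i
      refine le_int_clampf Λ hΛ f hδ ?_
      push_cast; nlinarith
    have habs : ∀ i : ℕ, |Λ (clampf f δ ((i+1)*δ)) - ∫ x, clampf f δ ((i+1)*δ) x ∂(mu Λ hΛ)|
        ≤ a i - a (i+2) := by
      intro i
      rw [abs_le]
      constructor
      · linarith [hlow i, hiup i]
      · linarith [hup i, hilow i]
    have hsum2 : ∑ i ∈ Finset.range M, (a i - a (i+2)) ≤ 2 * muv := by
      have e1 : ∑ i ∈ Finset.range M, (a i - a (i+1)) = a 0 - a M :=
        Finset.sum_range_sub' a M
      have e2 : ∑ i ∈ Finset.range M, (a (i+1) - a (i+2)) = a 1 - a (M+1) :=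
        Finset.sum_range_sub' (fun i => a (i+1)) M
      have e3 : ∑ i ∈ Finset.range M, (a i - a (i+2))
          = ∑ i ∈ Finset.range M, ((a i - a (i+1)) + (a (i+1) - a (i+2))) := by
        congr 1; ext i; ring
      rw [e3, Finset.sum_add_distrib, e1, e2]
      have := hauniv 0; have := hauniv 1; have := ha0 M; have := ha0 (M+1)
      linarith
    have hΛS : Λ S = δ * ∑ i ∈ Finset.range M, Λ (clampf f δ ((i+1)*δ)) := by
      rw [hS, _root_.map_smul, map_sum]; simp
    have hIS : ∫ x, S x ∂(mu Λ hΛ)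
        = δ * ∑ i ∈ Finset.range M, ∫ x, clampf f δ ((i+1)*δ) x ∂(mu Λ hΛ) := by
      have : ∀ x, S x = δ * ∑ i ∈ Finset.range M, clampf f δ ((i+1)*δ) x := by
        intro x; simp [hS, ContinuousMap.sum_apply]
      rw [integral_congr_ae (Filter.Eventually.of_forall this), integral_const_mul]
      congr 1
      rw [← integral_finset_sum _ (fun i _ => integrable_cm _ _)]
    have hdiff : |Λ S - ∫ x, S x ∂(mu Λ hΛ)| ≤ δ * (2 * muv) := by
      rw [hΛS, hIS, ← mul_sub, abs_mul, abs_of_pos hδ, ← Finset.sum_sub_distrib]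
      refine mul_le_mul_of_nonneg_left ?_ hδ.le
      exact le_trans (Finset.abs_sum_le_sum_abs _ _) (le_trans (Finset.sum_le_sum
        (fun i _ => habs i)) hsum2)
    -- bounds on Λ f and ∫ f
    have hb1 : Λ S ≤ Λ f := hΛ.mono Λ hSf
    have hb2 : Λ f ≤ Λ S + δ * Λ 1 := by
      have h := hΛ.mono Λ hfS
      rw [map_add] at h
      have h2 : Λ (δ • (1:C(X,ℝ))) = δ * Λ 1 := by rw [_root_.map_smul, smul_eq_mul]
      linarith
    have hb3 : ∫ x, S x ∂(mu Λ hΛ) ≤ ∫ x, f x ∂(mu Λ hΛ) :=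
      integral_mono (integrable_cm _ _) (integrable_cm _ _) hSf
    have hb4 : ∫ x, f x ∂(mu Λ hΛ) ≤ ∫ x, S x ∂(mu Λ hΛ) + δ * muv := by
      have h1 : ∫ x, (S + δ • (1:C(X,ℝ))) x ∂(mu Λ hΛ)
          = ∫ x, S x ∂(mu Λ hΛ) + δ * muv := by
        have : ∀ x, (S + δ • (1:C(X,ℝ))) x = S x + δ := by intro x; simp
        rw [integral_congr_ae (Filter.Eventually.of_forall this),
          integral_add (integrable_cm _ _) (integrable_const δ), integral_const,
          smul_eq_mul, hmuv, mul_comm]; rfl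
      rw [← h1]
      exact integral_mono (integrable_cm _ _) (integrable_cm _ _) hfS
    rw [abs_le]
    rw [abs_le] at hdiff
    constructor
    · nlinarith
    · nlinarith
  -- conclude
  set d := |Λ f - ∫ x, f x ∂(mu Λ hΛ)| with hd
  have hd0 : 0 ≤ d := abs_nonneg _
  set C := Λ 1 + 3 * muv with hC
  have hC0 : 0 ≤ C := by positivity
  by_contra hne
  have hdpos : 0 < d := by
    rcases lt_or_eq_of_le hd0 with h | h
    · exact h
    · exact absurd (sub_eq_zero.mp (abs_eq_zero.mp h.symm)) hne
  have hkey := key (d / (2*(C+1))) (by positivity)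
  have : d ≤ d * C / (2*(C+1)) := by
    calc d ≤ (d / (2*(C+1))) * C := hkey
      _ = d * C / (2*(C+1)) := by ring
  have h2 : d * (2*(C+1)) ≤ d * C := by
    rw [le_div_iff₀ (by positivity)] at this
    linarith
  nlinarith [mul_nonneg hd0 hC0]

lemma rep (hΛ : Pos Λ) (f : C(X,ℝ)) : Λ f = ∫ x, f x ∂(mu Λ hΛ) := by
  have hpt : ∀ x, -‖f‖ ≤ f x := by
    intro x
    have h1 : |f x| ≤ ‖f‖ := (Real.norm_eq_abs (f x)) ▸ f.norm_coe_le_norm x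
    linarith [neg_abs_le (f x)]
  have h1 := rep_nonneg Λ hΛ (f + ‖f‖ • 1) (by
    intro x
    show (0:C(X,ℝ)) x ≤ (f + ‖f‖ • 1) x
    simp only [ContinuousMap.add_apply, ContinuousMap.smul_apply, ContinuousMap.one_apply,
      ContinuousMap.zero_apply, smul_eq_mul, mul_one]
    linarith [hpt x])
  rw [map_add, _root_.map_smul, smul_eq_mul, lam_one Λ hΛ] at h1
  have h2 : ∫ x, (f + ‖f‖ • (1:C(X,ℝ))) x ∂(mu Λ hΛ)
      = ∫ x, f x ∂(mu Λ hΛ) + ‖f‖ * (mu Λ hΛ univ).toReal := by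
    have : ∀ x, (f + ‖f‖ • (1:C(X,ℝ))) x = f x + ‖f‖ := by intro x; simp
    rw [integral_congr_ae (Filter.Eventually.of_forall this),
      integral_add (integrable_cm _ _) (integrable_const _), integral_const, smul_eq_mul,
      mul_comm]; rfl
  rw [h2] at h1
  linarith



lemma cnn {f : C(X,ℝ)} : 0 ≤ f ↔ ∀ x, 0 ≤ f x := by
  rw [ContinuousMap.le_def]; simp

lemma cle {f g : C(X,ℝ)} : f ≤ g ↔ ∀ x, f x ≤ g x := ContinuousMap.le_def

section Decomp
variable (L : C(X,ℝ) →L[ℝ] ℝ)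

/-- positive part of a continuous map -/
noncomputable def pos (f : C(X,ℝ)) : C(X,ℝ) :=
  ContinuousMap.mk (fun x => max (f x) 0) (by fun_prop)

@[simp] lemma pos_apply (f : C(X,ℝ)) (x : X) : pos f x = max (f x) 0 := rfl

lemma pos_nonneg (f : C(X,ℝ)) : (0:C(X,ℝ)) ≤ pos f :=
  cnn.mpr fun x => by simp

lemma pos_of_nonneg {f : C(X,ℝ)} (hf : (0:C(X,ℝ)) ≤ f) : pos f = f := by
  ext x
  simp [max_eq_left (cnn.mp hf x)]

lemma pos_neg_of_nonneg {f : C(X,ℝ)} (hf : (0:C(X,ℝ)) ≤ f) : pos (-f) = 0 := by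
  ext x
  have := cnn.mp hf x
  simp only [pos_apply, ContinuousMap.neg_apply, ContinuousMap.zero_apply]
  rw [max_eq_right (by linarith)]

/-- the defining set for the positive part of the functional -/
def qs (f : C(X,ℝ)) : Set ℝ := L '' {g : C(X,ℝ) | 0 ≤ g ∧ g ≤ f}

lemma qs_nonempty {f : C(X,ℝ)} (hf : 0 ≤ f) : (qs L f).Nonempty :=
  ⟨L 0, ⟨0, ⟨le_rfl, hf⟩, rfl⟩⟩

lemma norm_le_of_le {g f : C(X,ℝ)} (h0 : 0 ≤ g) (h1 : g ≤ f) : ‖g‖ ≤ ‖f‖ := by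
  rw [ContinuousMap.norm_le _ (norm_nonneg f)]
  intro x
  rw [Real.norm_eq_abs, abs_of_nonneg (cnn.mp h0 x)]
  exact le_trans (cle.mp h1 x)
    ((le_abs_self _).trans ((Real.norm_eq_abs (f x)) ▸ f.norm_coe_le_norm x))

lemma qs_bddAbove (f : C(X,ℝ)) : BddAbove (qs L f) := by
  refine ⟨‖L‖ * ‖f‖, fun y hy => ?_⟩
  obtain ⟨g, ⟨hg0, hg1⟩, rfl⟩ := hy
  calc L g ≤ |L g| := le_abs_self _
    _ = ‖L g‖ := (Real.norm_eq_abs _).symm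
    _ ≤ ‖L‖ * ‖g‖ := L.le_opNorm g
    _ ≤ ‖L‖ * ‖f‖ := mul_le_mul_of_nonneg_left (norm_le_of_le hg0 hg1) (norm_nonneg L)

/-- positive part of the functional, on the nonnegative cone -/
noncomputable def q (f : C(X,ℝ)) : ℝ := sSup (qs L f)

lemma q_nonneg {f : C(X,ℝ)} (hf : 0 ≤ f) : 0 ≤ q L f := by
  have : L 0 ∈ qs L f := ⟨0, ⟨le_rfl, hf⟩, rfl⟩
  simpa [q] using le_csSup (qs_bddAbove L f) this

lemma le_q {f : C(X,ℝ)} (hf : 0 ≤ f) : L f ≤ q L f :=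
  le_csSup (qs_bddAbove L f) ⟨f, ⟨hf, le_rfl⟩, rfl⟩

lemma q_zero : q L 0 = 0 := by
  refine le_antisymm (csSup_le (qs_nonempty L le_rfl) ?_) (q_nonneg L le_rfl)
  rintro y ⟨g, ⟨hg0, hg1⟩, rfl⟩
  have : g = 0 := le_antisymm hg1 hg0
  simp [this]

lemma q_add {f₁ f₂ : C(X,ℝ)} (h₁ : 0 ≤ f₁) (h₂ : 0 ≤ f₂) :
    q L (f₁ + f₂) = q L f₁ + q L f₂ := by
  have hf : (0:C(X,ℝ)) ≤ f₁ + f₂ :=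
    cnn.mpr fun x => by
      have := cnn.mp h₁ x; have := cnn.mp h₂ x
      simp only [ContinuousMap.add_apply]; linarith
  refine le_antisymm ?_ ?_
  · refine csSup_le (qs_nonempty L hf) ?_
    rintro y ⟨g, ⟨hg0, hg1⟩, rfl⟩
    set g₁ : C(X,ℝ) := ContinuousMap.mk (fun x => min (g x) (f₁ x)) (by fun_prop) with hg₁def
    have hg₁x : ∀ x, g₁ x = min (g x) (f₁ x) := fun x => rfl
    have hg₁0 : (0:C(X,ℝ)) ≤ g₁ := cnn.mpr fun x => by
      have := cnn.mp hg0 x; have := cnn.mp h₁ x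
      rw [hg₁x, le_min_iff]
      exact ⟨by linarith, by linarith⟩
    have hg₁1 : g₁ ≤ f₁ := cle.mpr fun x => by rw [hg₁x]; exact min_le_right _ _
    have hg₂0 : (0:C(X,ℝ)) ≤ g - g₁ := cnn.mpr fun x => by
      simp only [ContinuousMap.sub_apply, hg₁x]
      linarith [min_le_left (g x) (f₁ x)]
    have hg₂1 : g - g₁ ≤ f₂ := cle.mpr fun x => by
      have h3 := cle.mp hg1 x
      have h4 := cnn.mp h₂ x
      simp only [ContinuousMap.add_apply] at h3
      simp only [ContinuousMap.sub_apply, hg₁x]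
      rcases le_total (g x) (f₁ x) with h | h
      · rw [min_eq_left h]; linarith
      · rw [min_eq_right h]; linarith
    have : L g = L g₁ + L (g - g₁) := by rw [← map_add]; congr 1; ring
    rw [this]
    exact add_le_add (le_csSup (qs_bddAbove L f₁) ⟨g₁, ⟨hg₁0, hg₁1⟩, rfl⟩)
      (le_csSup (qs_bddAbove L f₂) ⟨g - g₁, ⟨hg₂0, hg₂1⟩, rfl⟩)
  · rw [← le_sub_iff_add_le]
    refine csSup_le (qs_nonempty L h₁) ?_
    rintro y ⟨g₁, ⟨hg₁0, hg₁1⟩, rfl⟩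
    rw [le_sub_iff_add_le, add_comm, ← le_sub_iff_add_le]
    refine csSup_le (qs_nonempty L h₂) ?_
    rintro z ⟨g₂, ⟨hg₂0, hg₂1⟩, rfl⟩
    rw [le_sub_iff_add_le, ← map_add]
    refine le_csSup (qs_bddAbove L _) ⟨g₂ + g₁, ⟨?_, ?_⟩, rfl⟩
    · exact cnn.mpr fun x => by
        have := cnn.mp hg₂0 x; have := cnn.mp hg₁0 x
        simp only [ContinuousMap.add_apply]; linarith
    · exact cle.mpr fun x => by
        have := cle.mp hg₂1 x; have := cle.mp hg₁1 x
        simp only [ContinuousMap.add_apply]; linarith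

lemma q_smul {f : C(X,ℝ)} (hf : 0 ≤ f) {c : ℝ} (hc : 0 ≤ c) :
    q L (c • f) = c * q L f := by
  rcases eq_or_lt_of_le hc with rfl | hc
  · simp [q_zero]
  have hcf : (0:C(X,ℝ)) ≤ c • f := cnn.mpr fun x => by
    have := cnn.mp hf x
    simp only [ContinuousMap.smul_apply, smul_eq_mul]
    positivity
  refine le_antisymm ?_ ?_
  · refine csSup_le (qs_nonempty L hcf) ?_
    rintro y ⟨g, ⟨hg0, hg1⟩, rfl⟩
    have h1 : L g = c * L (c⁻¹ • g) := by
      rw [_root_.map_smul, smul_eq_mul, ← mul_assoc, mul_inv_cancel₀ hc.ne', one_mul]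
    rw [h1]
    refine mul_le_mul_of_nonneg_left (le_csSup (qs_bddAbove L f) ⟨c⁻¹ • g, ⟨?_, ?_⟩, rfl⟩) hc.le
    · exact cnn.mpr fun x => by
        have := cnn.mp hg0 x
        simp only [ContinuousMap.smul_apply, smul_eq_mul]
        positivity
    · exact cle.mpr fun x => by
        have := cle.mp hg1 x
        simp only [ContinuousMap.smul_apply, smul_eq_mul] at *
        rw [inv_mul_le_iff₀ hc]
        linarith
  · rw [← le_div_iff₀' hc]
    refine csSup_le (qs_nonempty L hf) ?_
    rintro y ⟨g, ⟨hg0, hg1⟩, rfl⟩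
    rw [le_div_iff₀' hc, ← smul_eq_mul, ← _root_.map_smul]
    refine le_csSup (qs_bddAbove L _) ⟨c • g, ⟨?_, ?_⟩, rfl⟩
    · exact cnn.mpr fun x => by
        have := cnn.mp hg0 x
        simp only [ContinuousMap.smul_apply, smul_eq_mul]
        positivity
    · exact cle.mpr fun x => by
        have := cle.mp hg1 x
        simp only [ContinuousMap.smul_apply, smul_eq_mul]
        nlinarith

/-- independence of decomposition -/
lemma q_decomp {u v u' v' : C(X,ℝ)} (hu : 0 ≤ u) (hv : 0 ≤ v) (hu' : 0 ≤ u') (hv' : 0 ≤ v')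
    (h : u + v' = u' + v) : q L u - q L v = q L u' - q L v' := by
  have h1 : q L (u + v') = q L u + q L v' := q_add L hu hv'
  have h2 : q L (u' + v) = q L u' + q L v := q_add L hu' hv
  rw [h, h2] at h1
  linarith

lemma max_mul_comm' (c a : ℝ) (hc : 0 ≤ c) : max (c*a) 0 = c * max a 0 := by
  rcases le_total a 0 with h | h
  · rw [max_eq_right h, max_eq_right (mul_nonpos_of_nonneg_of_nonpos hc h), mul_zero]
  · rw [max_eq_left h, max_eq_left (mul_nonneg hc h)]

/-- the positive-part functional -/
noncomputable def P (f : C(X,ℝ)) : ℝ := q L (pos f) - q L (pos (-f))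

lemma P_add (f g : C(X,ℝ)) : P L (f + g) = P L f + P L g := by
  have key : pos (f + g) + (pos (-f) + pos (-g)) = (pos f + pos g) + pos (-(f+g)) := by
    ext x
    simp only [ContinuousMap.add_apply, pos_apply, ContinuousMap.neg_apply, max_def]
    split_ifs <;> linarith
  have hsum1 : (0:C(X,ℝ)) ≤ pos f + pos g := cnn.mpr fun x => by
    have := cnn.mp (pos_nonneg f) x; have := cnn.mp (pos_nonneg g) x
    simp only [ContinuousMap.add_apply]; linarith
  have hsum2 : (0:C(X,ℝ)) ≤ pos (-f) + pos (-g) := cnn.mpr fun x => by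
    have := cnn.mp (pos_nonneg (-f)) x; have := cnn.mp (pos_nonneg (-g)) x
    simp only [ContinuousMap.add_apply]; linarith
  have h1 := q_decomp L (pos_nonneg (f+g)) (pos_nonneg (-(f+g))) hsum1 hsum2 key
  rw [P, h1, q_add L (pos_nonneg f) (pos_nonneg g), q_add L (pos_nonneg (-f)) (pos_nonneg (-g))]
  simp only [P]
  ring

lemma P_smul (c : ℝ) (f : C(X,ℝ)) : P L (c • f) = c * P L f := by
  rcases le_total 0 c with hc | hc
  · have h1 : pos (c • f) = c • pos f := by
      ext x
      show max ((c • f) x) 0 = c * max (f x) 0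
      simp only [ContinuousMap.smul_apply, smul_eq_mul]
      exact max_mul_comm' c (f x) hc
    have h2 : pos (-(c • f)) = c • pos (-f) := by
      ext x
      show max ((-(c • f)) x) 0 = c * max ((-f) x) 0
      simp only [ContinuousMap.neg_apply, ContinuousMap.smul_apply, smul_eq_mul]
      rw [show -(c * f x) = c * (-(f x)) by ring]
      exact max_mul_comm' c (-(f x)) hc
    rw [P, h1, h2, q_smul L (pos_nonneg f) hc, q_smul L (pos_nonneg (-f)) hc, P]
    ring
  · have hc' : 0 ≤ -c := by linarith
    have h1 : pos (c • f) = (-c) • pos (-f) := by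
      ext x
      show max ((c • f) x) 0 = (-c) * max ((-f) x) 0
      simp only [ContinuousMap.smul_apply, ContinuousMap.neg_apply, smul_eq_mul]
      rw [show c * f x = (-c) * (-(f x)) by ring]
      exact max_mul_comm' (-c) (-(f x)) hc'
    have h2 : pos (-(c • f)) = (-c) • pos f := by
      ext x
      show max ((-(c • f)) x) 0 = (-c) * max (f x) 0
      simp only [ContinuousMap.neg_apply, ContinuousMap.smul_apply, smul_eq_mul]
      rw [show -(c * f x) = (-c) * f x by ring]
      exact max_mul_comm' (-c) (f x) hc'
    rw [P, h1, h2, q_smul L (pos_nonneg (-f)) hc', q_smul L (pos_nonneg f) hc', P]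
    ring

/-- the positive part as a linear map -/
noncomputable def lamP : C(X,ℝ) →ₗ[ℝ] ℝ where
  toFun := P L
  map_add' := P_add L
  map_smul' := fun c f => by simp [P_smul L c f]

lemma lamP_pos : Pos (lamP L) := by
  intro f hf
  show 0 ≤ P L f
  rw [P, pos_of_nonneg hf, pos_neg_of_nonneg hf, q_zero]
  have := q_nonneg L hf
  linarith

lemma lamP_sub_pos : Pos (lamP L - (L : C(X,ℝ) →ₗ[ℝ] ℝ)) := by
  intro f hf
  simp only [LinearMap.sub_apply, ContinuousLinearMap.coe_coe]
  show 0 ≤ P L f - L f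
  rw [P, pos_of_nonneg hf, pos_neg_of_nonneg hf, q_zero]
  have := le_q L hf
  linarith

end Decomp
end Cybenko

open Cybenko

/-- Cybenko's universal approximation theorem: if `σ` is continuous and discriminatory
with respect to a compact set `K ⊆ ℝ^d` (encoded: any two finite regular Borel measures
on `K` giving equal integrals to all functions `x ↦ σ(w·x + b)` coincide, i.e. every
finite signed regular Borel measure annihilating all such functions is zero), then the
shallow networks `x ↦ ∑ᵢ cᵢ σ(wᵢ·x + bᵢ)` are dense in `C(K)`. -/
theorem stmt_5 (d : ℕ) (K : Set (EuclideanSpace ℝ (Fin d))) (hK : IsCompact K)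
    (σ : ℝ → ℝ) (hσ : Continuous σ)
    (hdisc : ∀ (μ ν : Measure K), IsFiniteMeasure μ → IsFiniteMeasure ν →
      μ.Regular → ν.Regular →
      (∀ (w : EuclideanSpace ℝ (Fin d)) (b : ℝ),
        ∫ x : K, σ ((inner ℝ w (x : EuclideanSpace ℝ (Fin d)) : ℝ) + b) ∂μ =
        ∫ x : K, σ ((inner ℝ w (x : EuclideanSpace ℝ (Fin d)) : ℝ) + b) ∂ν) →
      μ = ν) :
    Dense {f : C(K, ℝ) | ∃ (N : ℕ) (c b : Fin N → ℝ)
        (w : Fin N → EuclideanSpace ℝ (Fin d)),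
      ∀ x : K, f x = ∑ i, c i * σ ((inner ℝ (w i) (x : EuclideanSpace ℝ (Fin d)) : ℝ) + b i)} := by
  classical
  haveI : CompactSpace K := isCompact_iff_compactSpace.mp hK
  set gf : EuclideanSpace ℝ (Fin d) → ℝ → C(K,ℝ) := fun w b =>
    ContinuousMap.mk (fun x => σ ((inner ℝ w (x : EuclideanSpace ℝ (Fin d)) : ℝ) + b))
      (hσ.comp ((continuous_inner.comp (Continuous.prodMk_right w)).comp continuous_subtype_val |>.add continuous_const)) with hgf
  set Mset : Set C(K,ℝ) := {g | ∃ w b, g = gf w b} with hMset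
  set M : Submodule ℝ C(K,ℝ) := Submodule.span ℝ Mset with hM
  have hMS : (M : Set C(K,ℝ)) ⊆ {f : C(K, ℝ) | ∃ (N : ℕ) (c b : Fin N → ℝ)
      (w : Fin N → EuclideanSpace ℝ (Fin d)),
      ∀ x : K, f x = ∑ i, c i * σ ((inner ℝ (w i) (x : EuclideanSpace ℝ (Fin d)) : ℝ) + b i)} := by
    intro f hf
    rw [SetLike.mem_coe, Submodule.mem_span_set'] at hf
    obtain ⟨n, c, g, hsum⟩ := hf
    choose w b hwb using fun i : Fin n => (g i).2
    refine ⟨n, c, b, w, fun x => ?_⟩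
    rw [← hsum]
    rw [ContinuousMap.sum_apply]
    refine Finset.sum_congr rfl fun i _ => ?_
    rw [ContinuousMap.smul_apply, hwb i, smul_eq_mul]
    rfl
  refine Dense.mono hMS ?_
  -- suppose M is not dense
  by_contra hnd
  rw [Dense] at hnd
  push_neg at hnd
  obtain ⟨f₀, hf₀⟩ := hnd
  obtain ⟨l, u, hlu, hlf⟩ := geometric_hahn_banach_closed_point
    (M.convex.closure) isClosed_closure hf₀
  have hlM : ∀ g ∈ M, l g = 0 := by
    intro g hg
    by_contra hne
    have hmem : ((u+1)/(l g)) • g ∈ M := M.smul_mem _ hg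
    have := hlu _ (subset_closure hmem)
    rw [_root_.map_smul, smul_eq_mul, div_mul_cancel₀ _ hne] at this
    linarith
  have hu0 : 0 < u := by
    have := hlu 0 (subset_closure M.zero_mem)
    simpa using this
  set Λ₁ : C(K,ℝ) →ₗ[ℝ] ℝ := lamP l with hΛ₁
  set Λ₂ : C(K,ℝ) →ₗ[ℝ] ℝ := lamP l - (l : C(K,ℝ) →ₗ[ℝ] ℝ) with hΛ₂
  have hP1 : Pos Λ₁ := lamP_pos l
  have hP2 : Pos Λ₂ := lamP_sub_pos l
  have hΛdiff : ∀ f : C(K,ℝ), Λ₁ f - Λ₂ f = l f := by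
    intro f
    simp [hΛ₂, hΛ₁]
  have hint : ∀ (w : EuclideanSpace ℝ (Fin d)) (b : ℝ),
      ∫ x : K, σ ((inner ℝ w (x : EuclideanSpace ℝ (Fin d)) : ℝ) + b) ∂(mu Λ₁ hP1) =
      ∫ x : K, σ ((inner ℝ w (x : EuclideanSpace ℝ (Fin d)) : ℝ) + b) ∂(mu Λ₂ hP2) := by
    intro w b
    have h1 := rep Λ₁ hP1 (gf w b)
    have h2 := rep Λ₂ hP2 (gf w b)
    have hg0 : l (gf w b) = 0 := hlM _ (Submodule.subset_span ⟨w, b, rfl⟩)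
    have heq : Λ₁ (gf w b) = Λ₂ (gf w b) := by
      have := hΛdiff (gf w b)
      rw [hg0] at this
      linarith
    have e1 : ∫ x : K, σ ((inner ℝ w (x : EuclideanSpace ℝ (Fin d)) : ℝ) + b) ∂(mu Λ₁ hP1)
        = ∫ x : K, (gf w b) x ∂(mu Λ₁ hP1) := rfl
    have e2 : ∫ x : K, σ ((inner ℝ w (x : EuclideanSpace ℝ (Fin d)) : ℝ) + b) ∂(mu Λ₂ hP2)
        = ∫ x : K, (gf w b) x ∂(mu Λ₂ hP2) := rfl
    rw [e1, e2, ← h1, ← h2, heq]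
  have hmueq : mu Λ₁ hP1 = mu Λ₂ hP2 :=
    hdisc (mu Λ₁ hP1) (mu Λ₂ hP2) inferInstance inferInstance
      (mu_regular Λ₁ hP1) (mu_regular Λ₂ hP2) hint
  have hlf₀ : l f₀ = 0 := by
    have h1 := rep Λ₁ hP1 f₀
    have h2 := rep Λ₂ hP2 f₀
    rw [hmueq] at h1
    have := hΛdiff f₀
    linarith
  linarith
end

section
/- Every continuous sigmoidal function σ : ℝ → ℝ (i.e., σ(t) → 1 as t → ∞ and σ(t) → 0 as t → -∞) is discriminatory with respect to any compact set K ⊆ ℝ^d: if μ is a finite signed regular Borel measure on K with ∫_K σ(w·x + b) dμ(x) = 0 for all w ∈ ℝ^d, b ∈ ℝ, then μ = 0. -/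
open MeasureTheory Filter

/-- A continuous function with limits at `±∞` is bounded. -/
lemma sigmoid_bdd {σ : ℝ → ℝ} (hσ : Continuous σ) (h1 : Tendsto σ atTop (nhds 1))
    (h0 : Tendsto σ atBot (nhds 0)) : ∃ M : ℝ, ∀ t, ‖σ t‖ ≤ M := by
  obtain ⟨a, ha⟩ := eventually_atTop.mp ((Metric.tendsto_nhds.mp h1) 1 one_pos)
  obtain ⟨b, hb⟩ := eventually_atBot.mp ((Metric.tendsto_nhds.mp h0) 1 one_pos)
  obtain ⟨C, hC⟩ := (isCompact_Icc (a := b) (b := a)).exists_bound_of_continuousOn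
    hσ.continuousOn
  refine ⟨max 2 (max 1 C), fun t => ?_⟩
  rcases le_or_gt t b with h | h
  · have h' := hb t h
    rw [Real.dist_eq, sub_zero] at h'
    exact le_trans h'.le (le_max_of_le_right (le_max_left _ _))
  rcases le_or_gt a t with h' | h'
  · have h'' := ha t h'
    rw [Real.dist_eq] at h''
    have : ‖σ t‖ ≤ 2 := by
      have : |σ t| = |σ t - 1 + 1| := by ring_nf
      rw [Real.norm_eq_abs, this]
      calc |σ t - 1 + 1| ≤ |σ t - 1| + |(1 : ℝ)| := abs_add_le _ _
        _ ≤ 2 := by rw [abs_one]; linarith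
    exact this.trans (le_max_left _ _)
  · exact (hC t ⟨h.le, h'.le⟩).trans (le_max_of_le_right (le_max_right _ _))

/-- Continuous functions on a compact space are integrable for finite measures. -/
lemma cont_integrable {X : Type*} [MeasurableSpace X] [TopologicalSpace X]
    [OpensMeasurableSpace X] [CompactSpace X] (ρ : Measure X) [IsFiniteMeasure ρ]
    (g : C(X, ℝ)) : Integrable (fun x => g x) ρ :=
  (BoundedContinuousFunction.mkOfCompact g).integrable ρ

/-- Every continuous sigmoidal function (`σ(t) → 1` as `t → ∞`, `σ(t) → 0` as `t → -∞`)
is discriminatory with respect to any compact `K ⊆ ℝ^d`: if a finite signed regular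
Borel measure on `K` (encoded as a difference `μ - ν` of finite regular measures)
annihilates all functions `x ↦ σ(w·x + b)`, then it is zero (i.e. `μ = ν`). -/
theorem stmt_6 (d : ℕ) (K : Set (EuclideanSpace ℝ (Fin d))) (hK : IsCompact K)
    (σ : ℝ → ℝ) (hσ : Continuous σ)
    (h1 : Tendsto σ atTop (nhds 1)) (h0 : Tendsto σ atBot (nhds 0))
    (μ ν : Measure K) (hμ : IsFiniteMeasure μ) (hν : IsFiniteMeasure ν)
    (hμr : μ.Regular) (hνr : ν.Regular)
    (hint : ∀ (w : EuclideanSpace ℝ (Fin d)) (b : ℝ),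
      ∫ x : K, σ ((inner ℝ w (x : EuclideanSpace ℝ (Fin d)) : ℝ) + b) ∂μ =
      ∫ x : K, σ ((inner ℝ w (x : EuclideanSpace ℝ (Fin d)) : ℝ) + b) ∂ν) :
    μ = ν := by
  classical
  haveI : CompactSpace K := isCompact_iff_compactSpace.mp hK
  obtain ⟨M, hM⟩ := sigmoid_bdd hσ h1 h0
  -- two points where σ takes different values
  obtain ⟨c1, hc1⟩ := (h1.eventually (eventually_gt_nhds (by norm_num : (1:ℝ)/2 < 1))).exists
  obtain ⟨c2, hc2⟩ := (h0.eventually (eventually_lt_nhds (by norm_num : (0:ℝ) < 1/2))).exists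
  -- the linear functionals
  set ℓ : (EuclideanSpace ℝ (Fin d)) → K → ℝ := fun w x => (inner ℝ w (x : (EuclideanSpace ℝ (Fin d))) : ℝ) with hℓ
  have hℓc : ∀ w : (EuclideanSpace ℝ (Fin d)), Continuous (ℓ w) := fun w =>
    continuous_const.inner continuous_subtype_val
  -- measurable level sets
  have hS1 : ∀ (w : (EuclideanSpace ℝ (Fin d))) (t : ℝ), MeasurableSet {x : K | ℓ w x < t} := fun w t =>
    measurableSet_lt (hℓc w).measurable measurable_const
  have hS2 : ∀ (w : (EuclideanSpace ℝ (Fin d))) (t : ℝ), MeasurableSet {x : K | ℓ w x = t} := fun w t =>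
    measurableSet_eq_fun (hℓc w).measurable measurable_const
  -- key limiting identity
  have key : ∀ (w : (EuclideanSpace ℝ (Fin d))) (t c : ℝ),
      (μ {x : K | ℓ w x < t}).toReal + (μ {x : K | ℓ w x = t}).toReal * σ c =
      (ν {x : K | ℓ w x < t}).toReal + (ν {x : K | ℓ w x = t}).toReal * σ c := by
    intro w t c
    set F : ℕ → K → ℝ := fun n x => σ ((n : ℝ) * (t - ℓ w x) + c) with hF
    set G : K → ℝ := fun x =>
      Set.indicator {x : K | ℓ w x < t} (fun _ => (1:ℝ)) x +
      Set.indicator {x : K | ℓ w x = t} (fun _ => σ c) x with hG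
    have hFint : ∀ n, ∫ x, F n x ∂μ = ∫ x, F n x ∂ν := by
      intro n
      have hFeq : ∀ x : K, F n x =
          σ ((inner ℝ ((-(n : ℝ)) • w) (x : (EuclideanSpace ℝ (Fin d))) : ℝ) + ((n : ℝ) * t + c)) := by
        intro x
        rw [real_inner_smul_left]
        congr 1
        simp only [hF, hℓ]
        ring
      simp only [hFeq]
      exact hint ((-(n : ℝ)) • w) ((n : ℝ) * t + c)
    have hFmeas : ∀ n, AEStronglyMeasurable (F n) μ ∧ AEStronglyMeasurable (F n) ν := by
      intro n
      have : Continuous (F n) :=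
        hσ.comp ((continuous_const.mul (continuous_const.sub (hℓc w))).add continuous_const)
      exact ⟨this.aestronglyMeasurable, this.aestronglyMeasurable⟩
    have h_lim : ∀ x : K, Tendsto (fun n => F n x) atTop (nhds (G x)) := by
      intro x
      rcases lt_trichotomy (ℓ w x) t with h | h | h
      · have hGx : G x = 1 := by
          simp only [hG, Set.indicator_of_mem (show x ∈ {x : K | ℓ w x < t} from h),
            Set.indicator_of_notMem (show x ∉ {x : K | ℓ w x = t} from ne_of_lt h)]
          ring
        rw [hGx]
        have harg : Tendsto (fun n : ℕ => (n : ℝ) * (t - ℓ w x) + c) atTop atTop :=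
          tendsto_atTop_add_const_right _ c
            (tendsto_natCast_atTop_atTop.atTop_mul_const (by linarith))
        exact h1.comp harg
      · have hGx : G x = σ c := by
          simp only [hG, Set.indicator_of_notMem (show x ∉ {x : K | ℓ w x < t} from by
              simp [h]),
            Set.indicator_of_mem (show x ∈ {x : K | ℓ w x = t} from h)]
          ring
        rw [hGx]
        have : (fun n : ℕ => F n x) = fun _ => σ c := by
          funext n; simp [hF, h]
        rw [this]
        exact tendsto_const_nhds
      · have hGx : G x = 0 := by
          simp only [hG, Set.indicator_of_notMem (show x ∉ {x : K | ℓ w x < t} from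
              not_lt.mpr h.le),
            Set.indicator_of_notMem (show x ∉ {x : K | ℓ w x = t} from ne_of_gt h)]
          ring
        rw [hGx]
        have harg : Tendsto (fun n : ℕ => (n : ℝ) * (t - ℓ w x) + c) atTop atBot :=
          tendsto_atBot_add_const_right _ c
            (tendsto_natCast_atTop_atTop.atTop_mul_const_of_neg (by linarith))
        exact h0.comp harg
    have hTμ : Tendsto (fun n => ∫ x, F n x ∂μ) atTop (nhds (∫ x, G x ∂μ)) :=
      tendsto_integral_of_dominated_convergence (fun _ => M) (fun n => (hFmeas n).1)
        (integrable_const M) (fun n => Filter.Eventually.of_forall (fun x => hM _))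
        (Filter.Eventually.of_forall h_lim)
    have hTν : Tendsto (fun n => ∫ x, F n x ∂ν) atTop (nhds (∫ x, G x ∂ν)) :=
      tendsto_integral_of_dominated_convergence (fun _ => M) (fun n => (hFmeas n).2)
        (integrable_const M) (fun n => Filter.Eventually.of_forall (fun x => hM _))
        (Filter.Eventually.of_forall h_lim)
    have hGG : ∫ x, G x ∂μ = ∫ x, G x ∂ν := by
      refine tendsto_nhds_unique ?_ hTν
      rwa [show (fun n => ∫ x, F n x ∂μ) = fun n => ∫ x, F n x ∂ν from funext hFint] at hTμ
    have hI : ∀ (ρ : Measure K) [IsFiniteMeasure ρ], ∫ x, G x ∂ρ =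
        (ρ {x : K | ℓ w x < t}).toReal + (ρ {x : K | ℓ w x = t}).toReal * σ c := by
      intro ρ _
      rw [hG, integral_add ((integrable_const (1:ℝ)).indicator (hS1 w t))
        ((integrable_const (σ c)).indicator (hS2 w t)),
        integral_indicator_const _ (hS1 w t), integral_indicator_const _ (hS2 w t)]
      simp [mul_comm, Measure.real_def]
    rw [hI μ, hI ν] at hGG
    exact hGG
  -- separate the two pieces
  have hlt : ∀ (w : (EuclideanSpace ℝ (Fin d))) (t : ℝ), μ {x : K | ℓ w x < t} = ν {x : K | ℓ w x < t} ∧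
      μ {x : K | ℓ w x = t} = ν {x : K | ℓ w x = t} := by
    intro w t
    have k1 := key w t c1
    have k2 := key w t c2
    have heq2 : (μ {x : K | ℓ w x = t}).toReal = (ν {x : K | ℓ w x = t}).toReal := by
      have hz : ((μ {x : K | ℓ w x = t}).toReal - (ν {x : K | ℓ w x = t}).toReal) *
          (σ c1 - σ c2) = 0 := by linear_combination k1 - k2
      rcases mul_eq_zero.mp hz with h | h
      · linarith [sub_eq_zero.mp h]
      · linarith [sub_eq_zero.mp h]
    have heq1 : (μ {x : K | ℓ w x < t}).toReal = (ν {x : K | ℓ w x < t}).toReal := by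
      rw [heq2] at k1; linarith
    exact ⟨(ENNReal.toReal_eq_toReal_iff' (measure_ne_top μ _) (measure_ne_top ν _)).mp heq1,
      (ENNReal.toReal_eq_toReal_iff' (measure_ne_top μ _) (measure_ne_top ν _)).mp heq2⟩
  have hle : ∀ (w : (EuclideanSpace ℝ (Fin d))) (t : ℝ), μ {x : K | ℓ w x ≤ t} = ν {x : K | ℓ w x ≤ t} := by
    intro w t
    have hset : {x : K | ℓ w x ≤ t} = {x : K | ℓ w x < t} ∪ {x : K | ℓ w x = t} := by
      ext x; simp [le_iff_lt_or_eq]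
    have hdisj : Disjoint {x : K | ℓ w x < t} {x : K | ℓ w x = t} := by
      rw [Set.disjoint_left]
      intro x hx1 hx2
      exact absurd hx2 (ne_of_lt hx1)
    rw [hset, measure_union hdisj (hS2 w t), measure_union hdisj (hS2 w t),
      (hlt w t).1, (hlt w t).2]
  -- equality of integrals of exponentials of linear functionals
  have hexp : ∀ w : (EuclideanSpace ℝ (Fin d)), ∫ x : K, Real.exp (ℓ w x) ∂μ = ∫ x : K, Real.exp (ℓ w x) ∂ν := by
    intro w
    have hmeas := (hℓc w).measurable
    have hPQ : μ.map (ℓ w) = ν.map (ℓ w) := by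
      refine Measure.ext_of_Iic _ _ (fun a => ?_)
      rw [Measure.map_apply hmeas measurableSet_Iic, Measure.map_apply hmeas measurableSet_Iic]
      exact hle w a
    calc ∫ x : K, Real.exp (ℓ w x) ∂μ
        = ∫ t, Real.exp t ∂(μ.map (ℓ w)) :=
          (integral_map hmeas.aemeasurable Real.continuous_exp.aestronglyMeasurable).symm
      _ = ∫ t, Real.exp t ∂(ν.map (ℓ w)) := by rw [hPQ]
      _ = ∫ x : K, Real.exp (ℓ w x) ∂ν :=
          integral_map hmeas.aemeasurable Real.continuous_exp.aestronglyMeasurable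
  -- Stone–Weierstrass: equality of integrals of all continuous functions
  set e : (EuclideanSpace ℝ (Fin d)) → C(K, ℝ) := fun w => ⟨fun x => Real.exp (ℓ w x), Real.continuous_exp.comp (hℓc w)⟩
    with he
  set A : Subalgebra ℝ C(K, ℝ) := Algebra.adjoin ℝ (Set.range e) with hA
  set Mon : Submonoid C(K, ℝ) :=
    { carrier := Set.range e
      one_mem' := ⟨0, by ext x; simp [he, hℓ, Real.exp_zero]⟩
      mul_mem' := by
        rintro _ _ ⟨w1, rfl⟩ ⟨w2, rfl⟩
        refine ⟨w1 + w2, ?_⟩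
        ext x
        simp only [he, hℓ, ContinuousMap.mul_apply, ContinuousMap.coe_mk, inner_add_left]
        exact Real.exp_add _ _ } with hMon
  have hA_int : ∀ g ∈ A, ∫ x, g x ∂μ = ∫ x, g x ∂ν := by
    intro g hg
    have hg' : g ∈ Submodule.span ℝ (Set.range e : Set C(K, ℝ)) := by
      have h' := Algebra.adjoin_eq_span (R := ℝ) (s := (Set.range e : Set C(K, ℝ)))
      have hcl : (Submonoid.closure (Set.range e : Set C(K, ℝ)) : Set C(K, ℝ)) =
          Set.range e := by
        rw [show (Set.range e : Set C(K, ℝ)) = (Mon : Set C(K, ℝ)) from rfl,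
          Submonoid.closure_eq]
      rw [hcl] at h'
      have : g ∈ Subalgebra.toSubmodule A := hg
      rwa [h'] at this
    clear hg
    induction hg' using Submodule.span_induction with
    | mem f hf =>
      obtain ⟨w, rfl⟩ := hf
      exact hexp w
    | zero => simp
    | add f1 f2 _ _ ih1 ih2 =>
      simp only [ContinuousMap.add_apply]
      rw [integral_add (cont_integrable μ f1) (cont_integrable μ f2),
        integral_add (cont_integrable ν f1) (cont_integrable ν f2), ih1, ih2]
    | smul r f _ ih =>
      simp only [ContinuousMap.smul_apply, smul_eq_mul]
      rw [integral_const_mul, integral_const_mul, ih]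
  have hsep : A.SeparatesPoints := by
    intro x y hxy
    have hne : (x : (EuclideanSpace ℝ (Fin d))) - (y : (EuclideanSpace ℝ (Fin d))) ≠ 0 := sub_ne_zero.mpr (Subtype.coe_injective.ne hxy)
    refine ⟨e ((x : (EuclideanSpace ℝ (Fin d))) - (y : (EuclideanSpace ℝ (Fin d)))), ⟨e ((x : (EuclideanSpace ℝ (Fin d))) - (y : (EuclideanSpace ℝ (Fin d)))),
      Algebra.subset_adjoin (Set.mem_range_self _), rfl⟩, ?_⟩
    simp only [he, ContinuousMap.coe_mk]
    intro hcontra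
    have hinner : (inner ℝ ((x : (EuclideanSpace ℝ (Fin d))) - (y : (EuclideanSpace ℝ (Fin d)))) (x : (EuclideanSpace ℝ (Fin d))) : ℝ) =
        (inner ℝ ((x : (EuclideanSpace ℝ (Fin d))) - (y : (EuclideanSpace ℝ (Fin d)))) (y : (EuclideanSpace ℝ (Fin d))) : ℝ) := Real.exp_injective hcontra
    have : (inner ℝ ((x : (EuclideanSpace ℝ (Fin d))) - (y : (EuclideanSpace ℝ (Fin d)))) ((x : (EuclideanSpace ℝ (Fin d))) - (y : (EuclideanSpace ℝ (Fin d)))) : ℝ) = 0 := by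
      rw [inner_sub_right, hinner]; ring
    exact hne (inner_self_eq_zero.mp this)
  have hCont : ∀ f : C(K, ℝ), ∫ x, f x ∂μ = ∫ x, f x ∂ν := by
    intro f
    have habs : ∀ ε : ℝ, 0 < ε → |∫ x, f x ∂μ - ∫ x, f x ∂ν| ≤
        ε * ((μ Set.univ).toReal + (ν Set.univ).toReal) := by
      intro ε hε
      obtain ⟨g, hg⟩ :=
        ContinuousMap.exists_mem_subalgebra_near_continuousMap_of_separatesPoints A hsep f ε hε
      have hbd : ∀ x : K, ‖(g : C(K, ℝ)) x - f x‖ ≤ ε := by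
        intro x
        calc ‖(g : C(K, ℝ)) x - f x‖ = ‖((g : C(K, ℝ)) - f) x‖ := by
              simp [ContinuousMap.sub_apply]
          _ ≤ ‖(g : C(K, ℝ)) - f‖ := ContinuousMap.norm_coe_le_norm _ x
          _ ≤ ε := hg.le
      have hdiff : ∀ (ρ : Measure K) [IsFiniteMeasure ρ],
          |∫ x, (g : C(K, ℝ)) x ∂ρ - ∫ x, f x ∂ρ| ≤ ε * (ρ Set.univ).toReal := by
        intro ρ _
        rw [← integral_sub (cont_integrable ρ g) (cont_integrable ρ f)]
        calc |∫ x, ((g : C(K, ℝ)) x - f x) ∂ρ| ≤ ∫ x, ‖(g : C(K, ℝ)) x - f x‖ ∂ρ :=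
              by
                simpa [Real.norm_eq_abs] using
                  norm_integral_le_integral_norm (μ := ρ)
                    (fun x => ((g : C(↑K, ℝ)) x - f x))
          _ ≤ ∫ _x, ε ∂ρ := by
              refine integral_mono ((cont_integrable ρ g).sub (cont_integrable ρ f)).norm
                (integrable_const ε) (fun x => hbd x)
          _ = ε * (ρ Set.univ).toReal := by rw [integral_const]; rw [smul_eq_mul]; rw [Measure.real_def]; ring
      have hgμν : ∫ x, (g : C(K, ℝ)) x ∂μ = ∫ x, (g : C(K, ℝ)) x ∂ν := hA_int _ g.2
      have d1 := hdiff μ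
      have d2 := hdiff ν
      calc |∫ x, f x ∂μ - ∫ x, f x ∂ν|
          = |(∫ x, f x ∂μ - ∫ x, (g : C(K, ℝ)) x ∂μ) +
            (∫ x, (g : C(K, ℝ)) x ∂ν - ∫ x, f x ∂ν)| := by rw [hgμν] at *; ring_nf
        _ ≤ |∫ x, f x ∂μ - ∫ x, (g : C(K, ℝ)) x ∂μ| +
            |∫ x, (g : C(K, ℝ)) x ∂ν - ∫ x, f x ∂ν| := abs_add_le _ _
        _ ≤ ε * (μ Set.univ).toReal + ε * (ν Set.univ).toReal := by
            rw [abs_sub_comm]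
            exact add_le_add d1 d2
        _ = ε * ((μ Set.univ).toReal + (ν Set.univ).toReal) := by ring
    by_contra hne
    have hpos : 0 < |∫ x, f x ∂μ - ∫ x, f x ∂ν| := abs_pos.mpr (sub_ne_zero.mpr hne)
    set C := (μ Set.univ).toReal + (ν Set.univ).toReal with hC
    have hC0 : 0 ≤ C := add_nonneg ENNReal.toReal_nonneg ENNReal.toReal_nonneg
    rcases eq_or_lt_of_le hC0 with hC1 | hC1
    · have := habs 1 one_pos
      rw [← hC1] at this
      linarith
    · have := habs (|∫ x, f x ∂μ - ∫ x, f x ∂ν| / (2 * C)) (by positivity)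
      rw [div_mul_eq_mul_div, mul_div_assoc] at this
      have hhalf : C / (2 * C) = 1 / 2 := by
        rw [div_eq_div_iff (by positivity) (by norm_num)]; ring
      rw [hhalf] at this
      linarith
  -- conclude via equality of lintegrals of bounded continuous ℝ≥0-valued functions
  refine ext_of_forall_lintegral_eq_of_IsFiniteMeasure (fun f => ?_)
  have hfc : Continuous fun x : K => ((f x : ℝ)) := NNReal.continuous_coe.comp f.continuous
  have hint' := hCont ⟨fun x => (f x : ℝ), hfc⟩
  simp only [ContinuousMap.coe_mk] at hint'
  rw [lintegral_coe_eq_integral _ (cont_integrable μ ⟨fun x => (f x : ℝ), hfc⟩),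
    lintegral_coe_eq_integral _ (cont_integrable ν ⟨fun x => (f x : ℝ), hfc⟩), hint']
end

section
/- Let σ ∈ C^∞(ℝ) be such that for every k ∈ ℕ₀ there exists b_k ∈ ℝ with σ^{(k)}(b_k) ≠ 0. Then for every k ∈ ℕ₀, the monomial x ↦ x^k lies in the closure (with respect to uniform convergence on compact subsets of ℝ) of the span of functions {x ↦ σ(wx + b) : w, b ∈ ℝ}. -/
open Set Finset


lemma fwdDiff_iter_mvt (h : ℝ) (hh : 0 < h) (k : ℕ) :
    ∀ (f : ℝ → ℝ), ContDiff ℝ (⊤ : ℕ∞) f → ∀ y : ℝ,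
    ∃ ξ ∈ Set.Icc y (y + k * h), (fwdDiff h)^[k] f y = h ^ k * iteratedDeriv k f ξ := by
  induction k with
  | zero =>
    intro f hf y
    exact ⟨y, by simp, by simp⟩
  | succ k IH =>
    intro f hf y
    have hg : ContDiff ℝ (⊤ : ℕ∞) (fwdDiff h f) := by
      have : fwdDiff h f = fun z => f (z + h) - f z := rfl
      rw [this]
      exact (hf.comp (contDiff_id.add contDiff_const)).sub hf
    obtain ⟨ξ, hξ, heq⟩ := IH (fwdDiff h f) hg y
    have hval : iteratedDeriv k (fwdDiff h f) ξ
        = iteratedDeriv k f (ξ + h) - iteratedDeriv k f ξ := by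
      have : fwdDiff h f = fun z => f (z + h) - f z := rfl
      rw [this]
      have hsplit : (fun z => f (z + h) - f z) = (fun z => f (z + h)) - f := rfl
      rw [hsplit]
      simp only [← iteratedDerivWithin_univ]
      rw [iteratedDerivWithin_sub (Set.mem_univ ξ) uniqueDiffOn_univ
          (by exact ((hf.comp (contDiff_id.add contDiff_const)).of_le (m := k)
            (by exact_mod_cast le_top)).contDiffWithinAt)
          ((hf.of_le (m := k) (by exact_mod_cast le_top)).contDiffWithinAt)]
      congr 1
      simp only [iteratedDerivWithin_univ]
      rw [iteratedDeriv_comp_add_const]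
    have hcont : ContinuousOn (iteratedDeriv k f) (Set.Icc ξ (ξ + h)) :=
      (hf.continuous_iteratedDeriv k (by exact_mod_cast le_top)).continuousOn
    have hdiff : DifferentiableOn ℝ (iteratedDeriv k f) (Set.Ioo ξ (ξ + h)) :=
      (hf.differentiable_iteratedDeriv k
        (by exact_mod_cast lt_top_iff_ne_top.2 (by simp))).differentiableOn
    obtain ⟨η, hη, hslope⟩ := exists_deriv_eq_slope (iteratedDeriv k f)
      (by linarith : ξ < ξ + h) hcont hdiff
    refine ⟨η, ?_, ?_⟩
    · constructor
      · linarith [hξ.1, hη.1]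
      · have := hη.2
        have := hξ.2
        push_cast
        nlinarith
    · rw [Function.iterate_succ_apply, heq, hval, iteratedDeriv_succ]
      have : deriv (iteratedDeriv k f) η * (ξ + h - ξ)
          = iteratedDeriv k f (ξ + h) - iteratedDeriv k f ξ := by
        rw [hslope]; field_simp; exact mul_div_cancel_right₀ _ (by intro h0; linarith)
      rw [← this]
      ring

lemma ridge_iteratedDeriv (σ : ℝ → ℝ) (hσ : ContDiff ℝ (⊤ : ℕ∞) σ) (k : ℕ) (x b : ℝ) (w : ℝ) :
    iteratedDeriv k (fun w => σ (w * x + b)) w = x ^ k * iteratedDeriv k σ (w * x + b) := by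
  have hτ : ContDiff ℝ (k : ℕ∞) (fun u => σ (u + b)) :=
    (hσ.comp (contDiff_id.add contDiff_const)).of_le (by exact_mod_cast le_top)
  have h1 : (fun w => σ (w * x + b)) = fun w => (fun u => σ (u + b)) (x * w) := by
    funext w; ring_nf
  rw [h1, iteratedDeriv_comp_const_mul hτ x, iteratedDeriv_comp_add_const]
  ring_nf

/-- Step 1 of Pinkus's universality proof: if `σ ∈ C^∞(ℝ)` and for every `k` some
derivative value `σ^{(k)}(b_k) ≠ 0`, then every monomial `x ↦ x^k` lies in the closure,
with respect to uniform convergence on compact subsets of `ℝ`, of the span of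
`{x ↦ σ(wx + b) : w, b ∈ ℝ}`. -/
theorem stmt_7 (σ : ℝ → ℝ) (hσ : ContDiff ℝ (⊤ : ℕ∞) σ)
    (hder : ∀ k : ℕ, ∃ b : ℝ, iteratedDeriv k σ b ≠ 0) :
    ∀ (k : ℕ) (K : Set ℝ), IsCompact K → ∀ ε > (0 : ℝ),
      ∃ (N : ℕ) (c w b : Fin N → ℝ),
        ∀ x ∈ K, |x ^ k - ∑ i, c i * σ (w i * x + b i)| ≤ ε := by
  intro k K hK ε hε
  obtain ⟨b, hd⟩ := hder k
  set d := iteratedDeriv k σ b with hdname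
  obtain ⟨C, hC⟩ := hK.isBounded.exists_norm_le
  set M : ℝ := max C 0 with hMdef
  have hM0 : (0:ℝ) ≤ M := le_max_right _ _
  have hMK : ∀ x ∈ K, |x| ≤ M := fun x hx => (hC x hx).trans (le_max_left _ _)
  have hcont : Continuous (iteratedDeriv k σ) :=
    hσ.continuous_iteratedDeriv k (by exact_mod_cast le_top)
  set ε' : ℝ := ε * |d| / (M ^ k + 1) with hε'def
  have hMk : (0:ℝ) < M ^ k + 1 := by positivity
  have hε' : 0 < ε' := by
    apply div_pos (mul_pos hε (abs_pos.2 hd)) hMk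
  obtain ⟨δ, hδpos, hδ⟩ := Metric.continuousAt_iff.1 (hcont.continuousAt (x := b)) ε' hε'
  set h : ℝ := δ / (2 * (k * M + 1)) with hhdef
  have hkM : (0:ℝ) < k * M + 1 := by positivity
  have hh : 0 < h := by positivity
  have hkMnn : (0:ℝ) ≤ (k:ℝ) * M := mul_nonneg (Nat.cast_nonneg _) hM0
  have hkhM : (k : ℝ) * h * M < δ := by
    have hrew : (k:ℝ) * h * M = δ * (((k:ℝ) * M) / (2 * ((k:ℝ) * M + 1))) := by
      rw [hhdef]; ring
    rw [hrew]
    have hr : ((k:ℝ) * M) / (2 * ((k:ℝ) * M + 1)) < 1 := by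
      rw [div_lt_one (by positivity)]; linarith
    nlinarith
  refine ⟨k + 1, fun i => ((-1:ℝ) ^ (k - (i:ℕ)) * (k.choose i)) / (d * h ^ k),
    fun i => (i : ℕ) * h, fun _ => b, ?_⟩
  intro x hx
  have hgx : ContDiff ℝ (⊤ : ℕ∞) (fun w => σ (w * x + b)) :=
    hσ.comp ((contDiff_id.mul contDiff_const).add contDiff_const)
  obtain ⟨ξ, hξ, hmvt⟩ := fwdDiff_iter_mvt h hh k (fun w => σ (w * x + b)) hgx 0
  -- the sum equals the iterated forward difference divided by d * h^k
  have key : (∑ i : Fin (k+1), (((-1:ℝ) ^ (k - (i:ℕ)) * (k.choose i)) / (d * h ^ k))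
        * σ ((i:ℕ) * h * x + b))
      = ((fwdDiff h)^[k] (fun w => σ (w * x + b)) 0) / (d * h ^ k) := by
    rw [fwdDiff_iter_eq_sum_shift, Finset.sum_div,
      Fin.sum_univ_eq_sum_range (fun i => (((-1:ℝ) ^ (k - i) * (k.choose i)) / (d * h ^ k))
        * σ ((i:ℕ) * h * x + b))]
    refine Finset.sum_congr rfl fun j hj => ?_
    rw [zsmul_eq_mul]
    push_cast
    rw [zero_add, nsmul_eq_mul]
    ring
  rw [key, hmvt, ridge_iteratedDeriv σ hσ k x b ξ]
  -- bound
  have hξx : |ξ * x| < δ := by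
    have h0ξ : 0 ≤ ξ := by simpa using hξ.1
    have hξk : ξ ≤ k * h := by
      have := hξ.2; simpa using this
    have : |ξ * x| ≤ (k * h) * M := by
      rw [abs_mul, abs_of_nonneg h0ξ]
      exact mul_le_mul hξk (hMK x hx) (abs_nonneg x) (by positivity)
    linarith
  have hclose : |iteratedDeriv k σ (ξ * x + b) - d| < ε' := by
    have := hδ (x := ξ * x + b)
      (by rw [Real.dist_eq, add_sub_cancel_right]; exact hξx)
    rw [Real.dist_eq] at this
    exact this
  have hhk : (0:ℝ) < h ^ k := by positivity
  have hrw : x ^ k - h ^ k * (x ^ k * iteratedDeriv k σ (ξ * x + b)) / (d * h ^ k)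
      = x ^ k * (d - iteratedDeriv k σ (ξ * x + b)) / d := by
    field_simp
  rw [hrw, abs_div, abs_mul]
  rw [div_le_iff₀ (abs_pos.2 hd)]
  have hxk : |x| ^ k ≤ M ^ k := pow_le_pow_left₀ (abs_nonneg x) (hMK x hx) k
  have h1 : |x ^ k| * |d - iteratedDeriv k σ (ξ * x + b)| ≤ M ^ k * ε' := by
    rw [abs_pow]
    apply mul_le_mul hxk (by rw [abs_sub_comm]; exact hclose.le) (abs_nonneg _)
      (by positivity)
  refine h1.trans ?_
  have hrw2 : M ^ k * ε' = (ε * |d|) * (M ^ k / (M ^ k + 1)) := by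
    rw [hε'def]; ring
  rw [hrw2]
  have hr : M ^ k / (M ^ k + 1) ≤ 1 := by
    rw [div_le_one hMk]; linarith
  nlinarith [mul_pos hε (abs_pos.2 hd)]
end

section
/- Let f : [0,1] → ℝ be piecewise affine with p affine pieces, and let h : [0,1] → [0,1] be piecewise affine with q affine pieces. Then the L¹([0,1]) distance between f and g_m (the m-fold tent map composition, having 2^m pieces) is bounded below: if p < 2^{m-2} then ∫₀¹ |f(x) - g_m(x)| dx ≥ (2^{m-1} - 2p)/2^{m+2} ≥ 1/16 · (1 - 2p/2^{m-1}). -/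
open MeasureTheory intervalIntegral

lemma tent_left {t : ℝ} (h : t ≤ 1/2) : tent t = 2 * t := by
  unfold tent; rw [min_eq_left]; linarith

lemma tent_right {t : ℝ} (h : 1/2 ≤ t) : tent t = 2 - 2 * t := by
  unfold tent; rw [min_eq_right]; linarith

lemma tent_zero : tent 0 = 0 := by unfold tent; norm_num
lemma tent_one : tent 1 = 0 := by unfold tent; norm_num

lemma tent_symm (t : ℝ) : tent (1 - t) = tent t := by
  unfold tent; rw [min_comm]; ring_nf

lemma tent_cont : Continuous tent := by unfold tent; fun_prop

lemma tent_iter_cont (k : ℕ) : Continuous (tent^[k]) := by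
  induction k with
  | zero => simpa using continuous_id
  | succ k ih => rw [Function.iterate_succ']; exact tent_cont.comp ih

lemma tent_mapsTo : Set.MapsTo tent (Set.Icc (0:ℝ) 1) (Set.Icc (0:ℝ) 1) := by
  intro x hx
  obtain ⟨h0, h1⟩ := hx
  unfold tent
  constructor
  · rcases le_total x (1/2) with h | h
    · rw [min_eq_left (by linarith)]; linarith
    · rw [min_eq_right (by linarith)]; linarith
  · rcases le_total x (1/2) with h | h
    · rw [min_eq_left (by linarith)]; linarith
    · rw [min_eq_right (by linarith)]; linarith

lemma tent_iter_one (n : ℕ) : tent^[n+1] 1 = 0 := by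
  rw [Function.iterate_succ_apply, tent_one]
  exact Function.iterate_fixed tent_zero n

lemma tent_iter_formula (n : ℕ) : ∀ (k : ℕ), k < 2^n → ∀ t : ℝ, t ∈ Set.Icc (0:ℝ) 1 →
    tent^[n+1] (((k : ℝ) + t) / 2^n) = tent t := by
  induction n with
  | zero =>
    intro k hk t ht
    interval_cases k
    simp
  | succ n ih =>
    intro k hk t ht
    obtain ⟨ht0, ht1⟩ := ht
    have h2n : (0:ℝ) < 2^n := by positivity
    rw [Function.iterate_succ_apply]
    rcases le_total ((k:ℝ) + t) (2^n) with hle | hge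
    · have htent : tent (((k:ℝ) + t) / 2^(n+1)) = ((k:ℝ) + t) / 2^n := by
        rw [tent_left]
        · rw [pow_succ]; field_simp
        · rw [div_le_iff₀ (by positivity)]
          rw [pow_succ]
          linarith
      rw [htent]
      rcases Nat.lt_or_ge k (2^n) with hk' | hk'
      · exact ih k hk' t ⟨ht0, ht1⟩
      · have hkc : (2:ℝ)^n ≤ (k:ℝ) := by exact_mod_cast hk'
        have ht0' : t = 0 := le_antisymm (by linarith) ht0
        have hke : (k:ℝ) = 2^n := by linarith
        rw [ht0', hke, tent_zero, add_zero, div_self (ne_of_gt h2n)]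
        exact tent_iter_one n
    · have htent : tent (((k:ℝ) + t) / 2^(n+1)) = ((2:ℝ)^(n+1) - ((k:ℝ) + t)) / 2^n := by
        rw [tent_right]
        · rw [pow_succ]; field_simp
        · rw [le_div_iff₀ (by positivity)]
          push_cast [pow_succ] at *
          linarith
      rw [htent]
      rcases Nat.lt_or_ge k (2^n) with hk' | hk'
      · have hkc : (k:ℝ) ≤ 2^n - 1 := by
          have : (k:ℝ) + 1 ≤ 2^n := by exact_mod_cast hk'
          linarith
        have ht1' : t = 1 := le_antisymm ht1 (by linarith)
        have hke : (k:ℝ) = 2^n - 1 := by linarith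
        rw [ht1', hke]
        have : ((2:ℝ)^(n+1) - (2^n - 1 + 1)) / 2^n = 1 := by
          rw [pow_succ]; field_simp; ring
        rw [this, tent_one, tent_iter_one n]
      · set k' := 2^(n+1) - 1 - k with hk'def
        have hk'lt : k' < 2^n := by omega
        have hcast : ((2:ℝ)^(n+1) - ((k:ℝ) + t)) = ((k' : ℝ) + (1 - t)) := by
          have : (k' : ℝ) = 2^(n+1) - 1 - (k:ℝ) := by
            rw [hk'def]
            push_cast [Nat.cast_sub (by omega : k ≤ 2^(n+1) - 1)]
            push_cast [Nat.cast_sub (by omega : 1 ≤ 2^(n+1))]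
            ring
          rw [this]; push_cast; ring
        rw [hcast, ih k' hk'lt (1 - t) ⟨by linarith, by linarith⟩, tent_symm]

lemma poly_int (c e u v : ℝ) : ∫ t in u..v, (c*t+e) = c*(v^2-u^2)/2 + e*(v-u) := by
  rw [intervalIntegral.integral_add
      ((by apply Continuous.intervalIntegrable; fun_prop : IntervalIntegrable (fun t => c*t) volume u v))
      (continuous_const.intervalIntegrable u v),
    intervalIntegral.integral_const_mul, integral_id, intervalIntegral.integral_const]
  rw [smul_eq_mul]
  ring

lemma core (a b : ℝ) : 1/4 ≤ ∫ t in (0:ℝ)..1, |a * t + b - tent t| := by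
  have hci : ∀ u v : ℝ, IntervalIntegrable (fun t => |a * t + b - tent t|) volume u v := by
    intro u v
    exact ((Continuous.sub (by fun_prop) tent_cont).abs).intervalIntegrable u v
  have hsplit : ∫ t in (0:ℝ)..1, |a * t + b - tent t| =
      (∫ t in (0:ℝ)..(1/4), |a * t + b - tent t|) + (∫ t in (1/4:ℝ)..(1/2), |a * t + b - tent t|)
      + (∫ t in (1/2:ℝ)..(3/4), |a * t + b - tent t|) + (∫ t in (3/4:ℝ)..1, |a * t + b - tent t|) := by
    rw [integral_add_adjacent_intervals (hci 0 (1/4)) (hci (1/4) (1/2)),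
      integral_add_adjacent_intervals (hci 0 (1/2)) (hci (1/2) (3/4)),
      integral_add_adjacent_intervals (hci 0 (3/4)) (hci (3/4) 1)]
  have A1 : ∫ t in (0:ℝ)..(1/4), ((a-2)*t + b) ≤ ∫ t in (0:ℝ)..(1/4), |a * t + b - tent t| := by
    apply integral_mono_on (by norm_num) (by apply Continuous.intervalIntegrable; fun_prop) (hci _ _)
    intro t ht
    rw [show |a * t + b - tent t| = |a * t + b - 2*t| by rw [tent_left (by linarith [ht.2])]]
    calc (a-2)*t + b = a*t + b - 2*t := by ring
    _ ≤ _ := le_abs_self _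
  have A2 : ∫ t in (1/4:ℝ)..(1/2), (-((a-2)*t + b)) ≤ ∫ t in (1/4:ℝ)..(1/2), |a * t + b - tent t| := by
    apply integral_mono_on (by norm_num) (by apply Continuous.intervalIntegrable; fun_prop) (hci _ _)
    intro t ht
    rw [show |a * t + b - tent t| = |a * t + b - 2*t| by rw [tent_left (by linarith [ht.2])]]
    calc -((a-2)*t + b) = -(a*t + b - 2*t) := by ring
    _ ≤ _ := neg_le_abs _
  have A3 : ∫ t in (1/2:ℝ)..(3/4), (-((a+2)*t + (b-2))) ≤ ∫ t in (1/2:ℝ)..(3/4), |a * t + b - tent t| := by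
    apply integral_mono_on (by norm_num) (by apply Continuous.intervalIntegrable; fun_prop) (hci _ _)
    intro t ht
    rw [show |a * t + b - tent t| = |a * t + b - (2 - 2*t)| by rw [tent_right (by linarith [ht.1])]]
    calc -((a+2)*t + (b-2)) = -(a*t + b - (2-2*t)) := by ring
    _ ≤ _ := neg_le_abs _
  have A4 : ∫ t in (3/4:ℝ)..1, ((a+2)*t + (b-2)) ≤ ∫ t in (3/4:ℝ)..1, |a * t + b - tent t| := by
    apply integral_mono_on (by norm_num) (by apply Continuous.intervalIntegrable; fun_prop) (hci _ _)
    intro t ht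
    rw [show |a * t + b - tent t| = |a * t + b - (2 - 2*t)| by rw [tent_right (by linarith [ht.1])]]
    calc (a+2)*t + (b-2) = a*t + b - (2-2*t) := by ring
    _ ≤ _ := le_abs_self _
  rw [poly_int] at A1 A4
  have A2' := A2
  have A3' := A3
  rw [show (fun t => -((a-2)*t + b)) = fun t => (-(a-2))*t + (-b) from by funext t; ring] at A2'
  rw [show (fun t => -((a+2)*t + (b-2))) = fun t => (-(a+2))*t + (-(b-2)) from by funext t; ring] at A3'
  rw [poly_int] at A2' A3'
  rw [hsplit]
  nlinarith [A1, A2', A3', A4]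

set_option maxHeartbeats 4000000 in
/-- L¹ lower bound for approximating the sawtooth `g_m` by a piecewise affine function
with few pieces: if `f` is piecewise affine on `[0,1]` with `p < 2^{m-2}` pieces (and `h`
is any piecewise affine self-map of `[0,1]` with `q` pieces), then
`∫₀¹ |f - g_m| ≥ (2^{m-1} - 2p)/2^{m+2} ≥ (1/16)(1 - 2p/2^{m-1})`. -/
theorem stmt_12 (m p q : ℕ) (hm : 2 ≤ m) (f h : ℝ → ℝ)
    (If : Fin p → Set ℝ) (hIf : ∀ i, (If i).OrdConnected)
    (hIfd : Pairwise (Function.onFun Disjoint If))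
    (hIfu : (⋃ i, If i) = Set.Icc (0 : ℝ) 1)
    (hIfa : ∀ i, ∃ a b : ℝ, ∀ x ∈ If i, f x = a * x + b)
    (Ih : Fin q → Set ℝ) (hIh : ∀ i, (Ih i).OrdConnected)
    (hIhd : Pairwise (Function.onFun Disjoint Ih))
    (hIhu : (⋃ i, Ih i) = Set.Icc (0 : ℝ) 1)
    (hIha : ∀ i, ∃ a b : ℝ, ∀ x ∈ Ih i, h x = a * x + b)
    (hhmap : ∀ x ∈ Set.Icc (0 : ℝ) 1, h x ∈ Set.Icc (0 : ℝ) 1)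
    (hp : p < 2 ^ (m - 2)) :
    ((2 : ℝ) ^ (m - 1) - 2 * p) / 2 ^ (m + 2) ≤ ∫ x in (0 : ℝ)..1, |f x - tent^[m] x| ∧
    (1 / 16 : ℝ) * (1 - 2 * p / 2 ^ (m - 1)) ≤
      ((2 : ℝ) ^ (m - 1) - 2 * p) / 2 ^ (m + 2) := by
  classical
  obtain ⟨n, rfl⟩ : ∃ n, m = n + 1 := ⟨m - 1, by omega⟩
  have hn : 1 ≤ n := by omega
  have hp' : p < 2 ^ (n - 1) := by
    have e : n + 1 - 2 = n - 1 := by omega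
    rwa [e] at hp
  have hpn : p < 2 ^ n := lt_of_lt_of_le hp' (Nat.pow_le_pow_right (by norm_num) (by omega))
  have h2n : (0:ℝ) < 2 ^ n := by positivity
  have hpr : 2 * (p:ℝ) ≤ 2 ^ n := by
    have : (p:ℝ) + 1 ≤ 2 ^ (n-1) := by exact_mod_cast hp'
    have h2 : (2:ℝ) ^ (n-1) * 2 = 2 ^ n := by
      rw [← pow_succ]
      congr 1
      omega
    nlinarith
  have hexp1 : n + 1 - 1 = n := by omega
  rw [hexp1]
  constructor
  · -- main analytic inequality
    set N := 2 ^ n with hNdef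
    set L : ℝ := ((2:ℝ) ^ n)⁻¹ with hLdef
    have hL : 0 < L := by positivity
    have hNL : (N:ℝ) * L = 1 := by
      rw [hLdef, hNdef]
      push_cast
      field_simp
    choose A B hAB using hIfa
    have hp0 : 0 < p := by
      by_contra h0
      have hpe : p = 0 := by omega
      subst hpe
      have h01 : (0:ℝ) ∈ ⋃ i, If i := by rw [hIfu]; constructor <;> norm_num
      obtain ⟨s, ⟨i, rfl⟩, _⟩ := h01
      exact absurd i.2 (by omega)
    have hne : (Finset.univ : Finset (Fin p)).Nonempty := ⟨⟨0, hp0⟩, Finset.mem_univ _⟩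
    set C : ℝ := Finset.univ.sup' hne (fun i => |A i| + |B i|) with hCdef
    have hfb : ∀ x ∈ Set.Icc (0:ℝ) 1, |f x| ≤ C := by
      intro x hx
      have hx' : x ∈ ⋃ i, If i := by rw [hIfu]; exact hx
      obtain ⟨s, ⟨i, rfl⟩, hxi⟩ := hx'
      rw [hAB i x hxi]
      have hxabs : |x| ≤ 1 := abs_le.mpr ⟨by linarith [hx.1], hx.2⟩
      calc |A i * x + B i| ≤ |A i * x| + |B i| := abs_add_le _ _
        _ ≤ |A i| + |B i| := by
            rw [abs_mul]
            nlinarith [abs_nonneg (A i), abs_nonneg x]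
        _ ≤ C := Finset.le_sup' (fun i => |A i| + |B i|) (Finset.mem_univ i)
    set g0 : ℝ → ℝ := fun x => ∑ i, (If i).indicator (fun y => A i * y + B i) x with hg0def
    have hg0m : Measurable g0 := by
      apply Finset.measurable_sum
      intro i _
      exact Measurable.indicator (by fun_prop) (hIf i).measurableSet
    have hEqfg : Set.EqOn f g0 (Set.Icc (0:ℝ) 1) := by
      intro x hx
      have hx' : x ∈ ⋃ i, If i := by rw [hIfu]; exact hx
      obtain ⟨s, ⟨i, rfl⟩, hxi⟩ := hx'
      have hg0x : g0 x = A i * x + B i := by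
        show ∑ j, (If j).indicator (fun y => A j * y + B j) x = A i * x + B i
        rw [Finset.sum_eq_single i]
        · exact Set.indicator_of_mem hxi _
        · intro j _ hj
          apply Set.indicator_of_notMem
          intro hxj
          exact Set.disjoint_left.mp (hIfd hj) hxj hxi
        · intro hni
          exact absurd (Finset.mem_univ i) hni
      rw [hg0x, hAB i x hxi]
    have htb : ∀ x ∈ Set.Icc (0:ℝ) 1, tent^[n+1] x ∈ Set.Icc (0:ℝ) 1 :=
      fun x hx => tent_mapsTo.iterate (n+1) hx
    set F : ℝ → ℝ := fun x => |f x - tent^[n+1] x| with hFdef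
    have hFint : IntegrableOn F (Set.Icc (0:ℝ) 1) := by
      have hG : IntegrableOn (fun x => |g0 x - tent^[n+1] x|) (Set.Icc (0:ℝ) 1) := by
        constructor
        · exact ((hg0m.sub (tent_iter_cont (n+1)).measurable).abs).aestronglyMeasurable
        · apply HasFiniteIntegral.of_bounded (C := C + 1)
          filter_upwards [ae_restrict_mem measurableSet_Icc] with x hx
          rw [Real.norm_eq_abs, abs_abs]
          have h1 := hfb x hx
          rw [hEqfg hx] at h1
          have h2 := htb x hx
          have h3 : |tent^[n+1] x| ≤ 1 := abs_le.mpr ⟨by linarith [h2.1], h2.2⟩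
          calc |g0 x - tent^[n+1] x| ≤ |g0 x| + |tent^[n+1] x| := abs_sub _ _
            _ ≤ C + 1 := by linarith
      apply hG.congr_fun _ measurableSet_Icc
      intro x hx
      rw [hFdef]
      simp only
      rw [hEqfg hx]
    have hFI : ∀ u v : ℝ, Set.uIcc u v ⊆ Set.Icc 0 1 → IntervalIntegrable F volume u v :=
      fun u v hs => (hFint.mono_set hs).intervalIntegrable
    have htooth_sub : ∀ k : ℕ, k < N → Set.uIcc ((k:ℝ)*L) (((k:ℝ)+1)*L) ⊆ Set.Icc (0:ℝ) 1 := by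
      intro k hk
      rw [Set.uIcc_of_le (by nlinarith [hL])]
      apply Set.Icc_subset_Icc
      · positivity
      · have : ((k:ℝ)+1) ≤ N := by exact_mod_cast hk
        calc ((k:ℝ)+1)*L ≤ (N:ℝ)*L := by nlinarith [hL]
          _ = 1 := hNL
    have hIk : ∀ k, k < N → IntervalIntegrable F volume ((k:ℝ)*L) (((k+1:ℕ):ℝ)*L) := by
      intro k hk
      have := hFI ((k:ℝ)*L) (((k:ℝ)+1)*L) (htooth_sub k hk)
      have hc : (((k+1:ℕ):ℝ)) = (k:ℝ)+1 := by push_cast; ring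
      rwa [hc]
    have hsum : ∑ k ∈ Finset.range N, (∫ x in ((k:ℝ)*L)..(((k:ℝ)+1)*L), F x) = ∫ x in (0:ℝ)..1, F x := by
      have hs := sum_integral_adjacent_intervals (f := F) (μ := volume) (a := fun j => (j:ℝ)*L) (n := N) hIk
      simp only [Nat.cast_zero, zero_mul] at hs
      rw [hNL] at hs
      rw [← hs]
      apply Finset.sum_congr rfl
      intro k _
      push_cast
      ring_nf
    have tooth0 : ∀ k : ℕ, k < N → 0 ≤ ∫ x in ((k:ℝ)*L)..(((k:ℝ)+1)*L), F x := by
      intro k hk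
      apply intervalIntegral.integral_nonneg (by nlinarith [hL])
      intro u _
      exact abs_nonneg _
    have tooth_good : ∀ k : ℕ, k < N → ∀ i : Fin p,
        Set.Icc ((k:ℝ)*L) (((k:ℝ)+1)*L) ⊆ If i → L/4 ≤ ∫ x in ((k:ℝ)*L)..(((k:ℝ)+1)*L), F x := by
      intro k hk i hsub
      have hcomp := integral_comp_mul_add (a := (0:ℝ)) (b := 1) (f := F) (c := L) hL.ne' ((k:ℝ)*L)
      have he1 : L * 0 + (k:ℝ)*L = (k:ℝ)*L := by ring
      have he2 : L * 1 + (k:ℝ)*L = ((k:ℝ)+1)*L := by ring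
      rw [he1, he2] at hcomp
      have hinner : 1/4 ≤ ∫ t in (0:ℝ)..1, F (L * t + (k:ℝ)*L) := by
        have hEq2 : Set.EqOn (fun t => F (L * t + (k:ℝ)*L))
            (fun t => |(A i * L) * t + (A i * ((k:ℝ)*L) + B i) - tent t|) (Set.uIcc (0:ℝ) 1) := by
          intro t ht
          rw [Set.uIcc_of_le (by norm_num)] at ht
          have hx : L * t + (k:ℝ)*L ∈ Set.Icc ((k:ℝ)*L) (((k:ℝ)+1)*L) :=
            ⟨by nlinarith [ht.1, hL], by nlinarith [ht.2, hL]⟩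
          simp only [hFdef]
          rw [hAB i _ (hsub hx)]
          have ht2 : tent^[n+1] (L * t + (k:ℝ)*L) = tent t := by
            have he : L * t + (k:ℝ)*L = ((k:ℝ) + t) / 2^n := by
              rw [hLdef]; field_simp; ring
            rw [he]
            exact tent_iter_formula n k (by rwa [← hNdef]) t ht
          rw [ht2]
          congr 1
          ring
        rw [integral_congr hEq2]
        exact core _ _
      rw [hcomp, smul_eq_mul] at hinner
      have := mul_le_mul_of_nonneg_left hinner hL.le
      rw [← mul_assoc, mul_inv_cancel₀ hL.ne', one_mul] at this
      linarith
    -- counting good teeth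
    set S := (Finset.range N).filter
      (fun k : ℕ => ∃ i : Fin p, Set.Icc ((k:ℝ)*L) (((k:ℝ)+1)*L) ⊆ If i) with hSdef
    have hSsub : S ⊆ Finset.range N := Finset.filter_subset _ _
    have hex : ∀ k : ℕ, k < N → ∃ i : Fin p, ((k:ℝ)*L) ∈ If i := by
      intro k hk
      have hmem : (k:ℝ)*L ∈ Set.Icc (0:ℝ) 1 := by
        constructor
        · positivity
        · have : ((k:ℝ)) ≤ N := by exact_mod_cast hk.le
          calc (k:ℝ)*L ≤ (N:ℝ)*L := by nlinarith [hL]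
            _ = 1 := hNL
      rw [← hIfu] at hmem
      obtain ⟨s, ⟨i, rfl⟩, hxi⟩ := hmem
      exact ⟨i, hxi⟩
    set ψ : ℕ → Fin p := fun k => if hk : k < N then (hex k hk).choose else ⟨0, hp0⟩ with hψdef
    have hψ : ∀ k : ℕ, k < N → ((k:ℝ)*L) ∈ If (ψ k) := by
      intro k hk
      rw [hψdef]
      simp only [dif_pos hk]
      exact (hex k hk).choose_spec
    have hbadkey : ∀ k k' : ℕ, k ∈ Finset.range N \ S → k' ∈ Finset.range N \ S →
        ψ k = ψ k' → k < k' → False := by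
      intro k k' hk hk' hψeq hlt
      obtain ⟨hkN, hkS⟩ := Finset.mem_sdiff.mp hk
      obtain ⟨hk'N, _⟩ := Finset.mem_sdiff.mp hk'
      have hkN' := Finset.mem_range.mp hkN
      have hk'N' := Finset.mem_range.mp hk'N
      have h1 : ((k:ℝ)*L) ∈ If (ψ k) := hψ k hkN'
      have h2 : ((k':ℝ)*L) ∈ If (ψ k) := hψeq ▸ hψ k' hk'N'
      have hIcc : Set.Icc ((k:ℝ)*L) ((k':ℝ)*L) ⊆ If (ψ k) := (hIf (ψ k)).out h1 h2
      have hsub : Set.Icc ((k:ℝ)*L) (((k:ℝ)+1)*L) ⊆ If (ψ k) := by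
        apply Set.Subset.trans _ hIcc
        apply Set.Icc_subset_Icc le_rfl
        have : ((k:ℝ)+1) ≤ (k':ℝ) := by exact_mod_cast hlt
        nlinarith [hL]
      apply hkS
      rw [hSdef]
      exact Finset.mem_filter.mpr ⟨hkN, ⟨ψ k, hsub⟩⟩
    have hbad : (Finset.range N \ S).card ≤ p := by
      have := Finset.card_le_card_of_injOn ψ (fun k _ => Finset.mem_univ (ψ k))
        (s := Finset.range N \ S) (t := Finset.univ) ?_
      · simpa using this
      · intro k hk k' hk' hψeq
        by_contra hne'
        rcases lt_or_gt_of_ne hne' with hlt | hlt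
        · exact hbadkey k k' hk hk' hψeq hlt
        · exact hbadkey k' k hk' hk hψeq.symm hlt
    have hcardS : N - p ≤ S.card := by
      have h1 := Finset.card_sdiff_of_subset hSsub
      have h2 := Finset.card_le_card hSsub
      rw [Finset.card_range] at h1 h2
      omega
    have hsum_lb : ((N:ℝ) - p) * (L/4) ≤ ∑ k ∈ Finset.range N, ∫ x in ((k:ℝ)*L)..(((k:ℝ)+1)*L), F x := by
      have hS1 : ((N:ℝ) - p) * (L/4) ≤ (S.card : ℝ) * (L/4) := by
        apply mul_le_mul_of_nonneg_right _ (by positivity)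
        have hc : ((N - p : ℕ) : ℝ) ≤ (S.card : ℝ) := by exact_mod_cast hcardS
        rw [Nat.cast_sub hpn.le] at hc
        exact_mod_cast hc
      have hS2 : (S.card : ℝ) * (L/4) ≤ ∑ k ∈ S, ∫ x in ((k:ℝ)*L)..(((k:ℝ)+1)*L), F x := by
        rw [show (S.card : ℝ) * (L/4) = ∑ _k ∈ S, L/4 by rw [Finset.sum_const, nsmul_eq_mul]]
        apply Finset.sum_le_sum
        intro k hk
        obtain ⟨hkN, i, hi⟩ := Finset.mem_filter.mp hk
        exact tooth_good k (Finset.mem_range.mp hkN) i hi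
      have hS3 : ∑ k ∈ S, (∫ x in ((k:ℝ)*L)..(((k:ℝ)+1)*L), F x) ≤
          ∑ k ∈ Finset.range N, ∫ x in ((k:ℝ)*L)..(((k:ℝ)+1)*L), F x := by
        apply Finset.sum_le_sum_of_subset_of_nonneg hSsub
        intro k hk _
        exact tooth0 k (Finset.mem_range.mp hk)
      linarith
    have hfinal : ((2:ℝ)^n - 2*p) / 2^(n+1+2) ≤ ((N:ℝ) - p) * (L/4) := by
      have hcN : (N:ℝ) = 2^n := by rw [hNdef]; push_cast; ring
      rw [hcN, hLdef]
      rw [div_le_iff₀ (by positivity)]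
      have hpow : (2:ℝ)^(n+1+2) = 2^n * 8 := by
        rw [show n+1+2 = n+3 by omega, pow_add]
        norm_num
      rw [hpow]
      have : ((2:ℝ)^n - (p:ℝ)) * (((2:ℝ)^n)⁻¹/4) * (2^n * 8) = ((2:ℝ)^n - (p:ℝ)) * 2 := by
        field_simp
        ring
      rw [this]
      nlinarith [hpr, h2n]
    calc ((2:ℝ)^n - 2*p) / 2^(n+1+2) ≤ ((N:ℝ) - p) * (L/4) := hfinal
      _ ≤ ∑ k ∈ Finset.range N, ∫ x in ((k:ℝ)*L)..(((k:ℝ)+1)*L), F x := hsum_lb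
      _ = ∫ x in (0:ℝ)..1, F x := hsum
  · -- algebraic inequality
    have hpow : (2:ℝ)^(n+1+2) = 2^n * 8 := by
      rw [show n+1+2 = n+3 by omega, pow_add]
      norm_num
    have e1 : (1/16:ℝ) * (1 - 2*p/2^n) = ((2:ℝ)^n - 2*p) / (16 * 2^n) := by
      field_simp
    rw [e1, hpow, div_le_div_iff₀ (by positivity) (by positivity)]
    nlinarith [hpr, h2n]
end
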